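/- arXiv:1704.01685 — 8 statements merged into one kernel-verified Lean document; each statement's English description precedes it below -/
import Mathlib

section
/- Let p and q be distinct odd primes and N = pq. Then gcd(2^p - 1, (2^N - 1)/(2^p - 1)) = gcd(2^p - 1, q). -/
lemma geom_sum_nat (x : ℕ) (hx : 1 ≤ x) (n : ℕ) :
    (x - 1) * ∑ i ∈ Finset.range n, x ^ i = x ^ n - 1 := by
  induction n with
  | zero => simp [Nat.ModEq.refl]
  | succ n ih =>
    rw [Finset.sum_range_succ, Nat.mul_add, ih]
    have h1 : 1 ≤ x ^ n := Nat.one_le_pow _ _ hx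
    have h2 : x ^ n ≤ x ^ (n + 1) := Nat.pow_le_pow_right hx (by omega)
    have : (x - 1) * x ^ n = x ^ (n + 1) - x ^ n := by
      rw [Nat.sub_mul, one_mul, ← pow_succ']
    omega

lemma sum_pow_modeq (m n : ℕ) : (∑ i ∈ Finset.range n, (m + 1) ^ i) ≡ n [MOD m] := by
  induction n with
  | zero => simp [Nat.ModEq.refl]
  | succ n ih =>
    rw [Finset.sum_range_succ]
    have h1 : (m + 1 : ℕ) ≡ 1 [MOD m] := by
      unfold Nat.ModEq; simp [Nat.add_mod]
    calc (∑ i ∈ Finset.range n, (m + 1) ^ i) + (m + 1) ^ n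
        ≡ n + 1 ^ n [MOD m] := ih.add (h1.pow n)
      _ = n + 1 := by rw [one_pow]

theorem stmt_0 (p q : ℕ) (hp : p.Prime) (hq : q.Prime) (hop : Odd p) (hoq : Odd q)
    (hne : p ≠ q) :
    Nat.gcd (2 ^ p - 1) ((2 ^ (p * q) - 1) / (2 ^ p - 1)) = Nat.gcd (2 ^ p - 1) q := by
  set m := 2 ^ p - 1 with hm
  have hx : (1:ℕ) ≤ 2 ^ p := Nat.one_le_two_pow
  have hm1 : m + 1 = 2 ^ p := by omega
  have hmpos : 0 < m := by
    have : 2 ≤ 2 ^ p := by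
      calc 2 = 2 ^ 1 := rfl
      _ ≤ 2 ^ p := Nat.pow_le_pow_right (by norm_num) hp.one_lt.le
    omega
  have hfac : 2 ^ (p * q) - 1 = m * ∑ i ∈ Finset.range q, (2 ^ p) ^ i := by
    rw [pow_mul, ← geom_sum_nat (2 ^ p) hx q]
  have hdiv : (2 ^ (p * q) - 1) / m = ∑ i ∈ Finset.range q, (2 ^ p) ^ i := by
    rw [hfac, Nat.mul_div_cancel_left _ hmpos]
  rw [hdiv]
  have hmod : (∑ i ∈ Finset.range q, (2 ^ p) ^ i) ≡ q [MOD m] := by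
    rw [← hm1]; exact sum_pow_modeq m q
  rw [Nat.gcd_rec m, Nat.gcd_rec m q, hmod]
end

section
/- Let p < q be odd primes and N = pq. Then gcd(2^q - 1, (2^N - 1)/(2^q - 1)) = 1. -/
theorem stmt_3 (p q : ℕ) (hp : p.Prime) (hq : q.Prime) (hop : Odd p) (hoq : Odd q)
    (hlt : p < q) :
    Nat.gcd (2 ^ q - 1) ((2 ^ (p * q) - 1) / (2 ^ q - 1)) = 1 := by
  set m : ℕ := 2 ^ q - 1 with hm
  set Q : ℕ := ∑ i ∈ Finset.range p, (2 ^ q) ^ i with hQ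
  have hx1 : (1:ℕ) ≤ 2 ^ q := Nat.one_le_two_pow
  have hm0 : 0 < m := by
    have : (2:ℕ) ≤ 2 ^ q := by
      calc (2:ℕ) = 2 ^ 1 := (pow_one 2).symm
        _ ≤ 2 ^ q := Nat.pow_le_pow_right (by norm_num) hq.one_lt.le
    omega
  have hmZ : (m : ℤ) = 2 ^ q - 1 := by
    rw [hm]; push_cast [Nat.cast_sub hx1]; ring
  have hmul : m * Q = 2 ^ (p * q) - 1 := by
    have hZ : (m : ℤ) * (Q : ℤ) = 2 ^ (p * q) - 1 := by
      rw [hmZ, hQ]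
      push_cast
      rw [mul_comm, geom_sum_mul, ← pow_mul, mul_comm q p]
    have h1 : (1:ℕ) ≤ 2 ^ (p * q) := Nat.one_le_two_pow
    have := hZ
    rw [show ((2:ℤ) ^ (p*q) - 1) = ((2 ^ (p*q) - 1 : ℕ) : ℤ) by
      push_cast [Nat.cast_sub h1]; ring] at this
    exact_mod_cast this
  have hdiv : (2 ^ (p * q) - 1) / m = Q := by
    rw [← hmul, Nat.mul_div_cancel_left _ hm0]
  rw [hdiv]
  set d := Nat.gcd m Q with hd
  have hdm : d ∣ m := Nat.gcd_dvd_left m Q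
  have hdQ : d ∣ Q := Nat.gcd_dvd_right m Q
  -- m divides Q - p (over ℤ)
  have hQp : (m : ℤ) ∣ (Q : ℤ) - p := by
    have : (Q : ℤ) - p = ∑ i ∈ Finset.range p, (((2:ℤ) ^ q) ^ i - 1) := by
      rw [hQ, Finset.sum_sub_distrib]
      push_cast
      simp
    rw [this]
    refine Finset.dvd_sum fun i _ => ?_
    have := sub_dvd_pow_sub_pow ((2:ℤ) ^ q) 1 i
    simpa [hmZ] using this
  have hdp : d ∣ p := by
    have h1 : (d : ℤ) ∣ (Q : ℤ) := Int.natCast_dvd_natCast.mpr hdQ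
    have h2 : (d : ℤ) ∣ (Q : ℤ) - p := (Int.natCast_dvd_natCast.mpr hdm).trans hQp
    have : (d : ℤ) ∣ (p : ℤ) := by
      have := dvd_sub h1 h2; simpa using this
    exact_mod_cast this
  rcases (Nat.Prime.eq_one_or_self_of_dvd hp d hdp) with h | h
  · exact h
  · -- d = p, so p ∣ m = 2^q - 1, contradiction
    exfalso
    have hpm : p ∣ m := h ▸ hdm
    haveI : Fact p.Prime := ⟨hp⟩
    have hp3 : 3 ≤ p := by
      rcases hop with ⟨k, hk⟩
      have := hp.two_le
      omega
    have h2q : (2 : ZMod p) ^ q = 1 := by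
      have h0 : ((2 ^ q - 1 : ℕ) : ZMod p) = 0 :=
        (ZMod.natCast_eq_zero_iff _ _).mpr hpm
      have : ((2:ZMod p) ^ q - 1) = 0 := by
        rw [← h0]; push_cast [Nat.cast_sub hx1]; ring
      linear_combination this
    have hodvd : orderOf (2 : ZMod p) ∣ q := orderOf_dvd_of_pow_eq_one h2q
    have hne0 : (2 : ZMod p) ≠ 0 := by
      intro h0
      have : (p : ℕ) ∣ 2 := by
        have : ((2:ℕ) : ZMod p) = 0 := by exact_mod_cast h0
        exact (ZMod.natCast_eq_zero_iff _ _).mp this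
      have := Nat.le_of_dvd (by norm_num) this
      omega
    have hoq' : orderOf (2 : ZMod p) = q := by
      rcases hq.eq_one_or_self_of_dvd _ hodvd with h1 | h1
      · exfalso
        have : (2 : ZMod p) = 1 := orderOf_eq_one_iff.mp h1
        have h10 : (1 : ZMod p) = 0 := by linear_combination this
        exact one_ne_zero h10
      · exact h1
    have hcard : orderOf (2 : ZMod p) ∣ p - 1 := ZMod.orderOf_dvd_card_sub_one hne0
    rw [hoq'] at hcard
    have := Nat.le_of_dvd (by omega) hcard
    omega
end

section
/- Let p, q be distinct odd primes with gcd(p-1, q-1) = d, and let g be a common primitive root of p and q. Let D_i = {g^t x^i mod pq : 0 ≤ t < (p-1)(q-1)/d} where x ≡ g mod p and x ≡ 1 mod q. Then the D_i for i = 0, 1, ..., d-1 are pairwise disjoint and their union is the unit group (Z/pqZ)*. -/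
private lemma aux_pow_eq {M : Type*} [Monoid M] (u : Mˣ) (s t : ℕ) :
    ((u : M) ^ s = (u : M) ^ t) ↔ s ≡ t [MOD orderOf (u : M)] := by
  rw [orderOf_units, ← Units.val_pow_eq_pow_val, ← Units.val_pow_eq_pow_val,
    ← Units.ext_iff, pow_eq_pow_iff_modEq]

private lemma aux_gen {G : Type*} [Group G] [Fintype G] (g : G)
    (h : orderOf g = Fintype.card G) (y : G) : ∃ k : ℕ, g ^ k = y := by
  have h1 : Nat.card (Subgroup.zpowers g) = Nat.card G := by
    simp [Nat.card_eq_fintype_card, Fintype.card_zpowers, h]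
  have h2 := Subgroup.eq_top_of_card_eq _ h1
  have : y ∈ Subgroup.zpowers g := by simp [h2]
  exact (Submonoid.mem_powers_iff _ _).mp (mem_powers_iff_mem_zpowers.mpr this)

private lemma aux_isUnit_prod {M N : Type*} [Monoid M] [Monoid N] (a : M × N)
    (h1 : IsUnit a.1) (h2 : IsUnit a.2) : IsUnit a := by
  obtain ⟨u, hu⟩ := h1
  obtain ⟨v, hv⟩ := h2
  exact ⟨MulEquiv.prodUnits.symm (u, v), by simp [MulEquiv.prodUnits, hu, hv]⟩

theorem stmt_9
    (p q : ℕ) (hp : p.Prime) (hq : q.Prime) (hop : Odd p) (hoq : Odd q)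
    (hne : p ≠ q) (d : ℕ) (hd : d = Nat.gcd (p - 1) (q - 1))
    (g : ℕ) (hgp : orderOf (g : ZMod p) = p - 1) (hgq : orderOf (g : ZMod q) = q - 1)
    (x : ℕ) (hxp : (x : ZMod p) = (g : ZMod p)) (hxq : (x : ZMod q) = 1)
    (L : ℕ) (hL : L = (p - 1) * (q - 1) / d)
    (D : ℕ → Finset (ZMod (p * q)))
    (hD : D = fun i => (Finset.range L).image
      (fun t => (g : ZMod (p * q)) ^ t * (x : ZMod (p * q)) ^ i)) :
    (∀ i < d, ∀ j < d, i ≠ j → Disjoint (D i) (D j)) ∧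
      (↑((Finset.range d).biUnion D) : Set (ZMod (p * q))) = {a : ZMod (p * q) | IsUnit a} := by
  haveI : Fact p.Prime := ⟨hp⟩
  haveI : Fact q.Prime := ⟨hq⟩
  have hm : 0 < p - 1 := Nat.sub_pos_of_lt hp.one_lt
  have hn : 0 < q - 1 := Nat.sub_pos_of_lt hq.one_lt
  have hdpos : 0 < d := hd ▸ Nat.gcd_pos_of_pos_left _ hm
  have hLlcm : L = Nat.lcm (p - 1) (q - 1) := by rw [hL, hd]; rfl
  have hLpos : 0 < L := hLlcm ▸ Nat.pos_of_ne_zero (Nat.lcm_ne_zero hm.ne' hn.ne')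
  have hpq : Nat.Coprime p q := (Nat.coprime_primes hp hq).mpr hne
  set φ := ZMod.chineseRemainder hpq with hφ
  -- g is a unit mod p and mod q
  have hgup : IsUnit (g : ZMod p) :=
    (orderOf_pos_iff.mp (hgp ▸ hm)).isUnit
  have hguq : IsUnit (g : ZMod q) :=
    (orderOf_pos_iff.mp (hgq ▸ hn)).isUnit
  -- characterization of powers of g mod p and mod q
  have h1 : ∀ a b : ℕ, ((g : ZMod p) ^ a = (g : ZMod p) ^ b ↔ a ≡ b [MOD (p - 1)]) := by
    intro a b
    rw [← hgup.unit_spec, aux_pow_eq, hgup.unit_spec, hgp]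
  have h2 : ∀ a b : ℕ, ((g : ZMod q) ^ a = (g : ZMod q) ^ b ↔ a ≡ b [MOD (q - 1)]) := by
    intro a b
    rw [← hguq.unit_spec, aux_pow_eq, hguq.unit_spec, hgq]
  -- value of φ on the generators
  have hval : ∀ t i : ℕ, φ ((g : ZMod (p * q)) ^ t * (x : ZMod (p * q)) ^ i)
      = ((g : ZMod p) ^ (t + i), (g : ZMod q) ^ t) := by
    intro t i
    rw [map_mul, map_pow, map_pow, map_natCast, map_natCast]
    ext
    · simp [hxp, pow_add]
    · simp [hxq]
  -- key equality characterization
  have hkey : ∀ t i s j : ℕ,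
      ((g : ZMod (p * q)) ^ t * (x : ZMod (p * q)) ^ i
        = (g : ZMod (p * q)) ^ s * (x : ZMod (p * q)) ^ j)
      ↔ (t + i ≡ s + j [MOD (p - 1)] ∧ t ≡ s [MOD (q - 1)]) := by
    intro t i s j
    rw [← φ.injective.eq_iff, hval, hval, Prod.ext_iff]
    simp only [h1, h2]
  constructor
  · -- disjointness
    intro i hi j hj hij
    rw [Finset.disjoint_left]
    intro a hai haj
    rw [hD] at hai haj
    simp only [Finset.mem_image, Finset.mem_range] at hai haj
    obtain ⟨t, ht, rfl⟩ := hai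
    obtain ⟨s, hs, heq⟩ := haj
    obtain ⟨hP, hQ⟩ := (hkey s j t i).mp heq
    have hdm : d ∣ p - 1 := hd ▸ Nat.gcd_dvd_left _ _
    have hdn : d ∣ q - 1 := hd ▸ Nat.gcd_dvd_right _ _
    have hP' : s + j ≡ t + i [MOD d] := hP.of_dvd hdm
    have hQ' : s ≡ t [MOD d] := hQ.of_dvd hdn
    have : j ≡ i [MOD d] := Nat.ModEq.add_left_cancel hQ' hP'
    exact hij (this.eq_of_lt_of_lt hj hi).symm
  · -- union is the unit group
    ext a
    simp only [Finset.coe_biUnion, Finset.mem_coe, Finset.mem_range, Set.mem_iUnion,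
      Set.mem_setOf_eq, hD, Finset.mem_image, Finset.mem_range]
    constructor
    · rintro ⟨i, hi, t, ht, rfl⟩
      have hux : IsUnit (φ ((g : ZMod (p * q)) ^ t * (x : ZMod (p * q)) ^ i)) := by
        rw [hval]
        exact aux_isUnit_prod _ (hgup.pow _) (hguq.pow _)
      have := hux.map φ.symm.toRingHom
      simpa using this
    · intro ha
      -- decompose a via φ
      have haP : IsUnit (φ a).1 := (ha.map φ.toRingHom).map (RingHom.fst _ _)
      have haQ : IsUnit (φ a).2 := (ha.map φ.toRingHom).map (RingHom.snd _ _)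
      -- the units of g
      set gp : (ZMod p)ˣ := hgup.unit with hgpdef
      set gq : (ZMod q)ˣ := hguq.unit with hgqdef
      have hogp : orderOf gp = Fintype.card (ZMod p)ˣ := by
        rw [ZMod.card_units, ← hgp, ← orderOf_units, hgup.unit_spec]
      have hogq : orderOf gq = Fintype.card (ZMod q)ˣ := by
        rw [ZMod.card_units, ← hgq, ← orderOf_units, hguq.unit_spec]
      obtain ⟨A, hA⟩ := aux_gen gp hogp haP.unit
      obtain ⟨B, hB⟩ := aux_gen gq hogq haQ.unit
      -- replace A by a large enough exponent
      set A' := A + B * (p - 1) with hA'def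
      have hA'B : B ≤ A' := (Nat.le_mul_of_pos_right B hm).trans (Nat.le_add_left _ _)
      have hgpA' : gp ^ A' = gp ^ A := by
        rw [hA'def, pow_add, mul_comm B, pow_mul]
        have : gp ^ (p - 1) = 1 := by
          have := pow_orderOf_eq_one gp
          rwa [← orderOf_units, hgup.unit_spec, hgp] at this
        simp [this]
      -- choose i
      set i := (A' - B) % d with hidef
      have hiB : i ≤ A' - B := Nat.mod_le _ _
      have hiA' : i ≤ A' := hiB.trans (Nat.sub_le _ _)
      have hBle : B ≤ A' - i := Nat.le_sub_of_add_le (by omega)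
      have hmodi : B ≡ (A' - i) [MOD d] := by
        rw [Nat.modEq_iff_dvd' hBle]
        have h3 : d ∣ (A' - B) - i := by
          exact (Nat.modEq_iff_dvd' hiB).mp (Nat.mod_modEq _ _)
        have : A' - i - B = A' - B - i := by omega
        rw [this]
        exact h3
      -- CRT for exponents
      have hgcd : (A' - i) ≡ B [MOD Nat.gcd (p - 1) (q - 1)] := by
        rw [← hd]; exact hmodi.symm
      obtain ⟨t0, ht0p, ht0q⟩ := Nat.chineseRemainder' hgcd
      set t := t0 % L with htdef
      have htL : t < L := Nat.mod_lt _ hLpos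
      have htp : t ≡ (A' - i) [MOD (p - 1)] :=
        ((Nat.mod_modEq t0 L).of_dvd (hLlcm ▸ Nat.dvd_lcm_left _ _)).trans ht0p
      have htq : t ≡ B [MOD (q - 1)] :=
        ((Nat.mod_modEq t0 L).of_dvd (hLlcm ▸ Nat.dvd_lcm_right _ _)).trans ht0q
      refine ⟨i, Nat.mod_lt _ hdpos, t, htL, ?_⟩
      -- prove the equality via φ
      apply φ.injective
      rw [hval]
      have hcomp1 : (g : ZMod p) ^ (t + i) = (φ a).1 := by
        have e1 : (g : ZMod p) ^ (t + i) = (g : ZMod p) ^ A' := by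
          rw [h1]
          calc t + i ≡ (A' - i) + i [MOD (p-1)] := htp.add_right i
            _ = A' := by omega
        have e2 : (g : ZMod p) ^ A' = (φ a).1 := by
          have : (gp : ZMod p) ^ A' = ((gp ^ A' : (ZMod p)ˣ) : ZMod p) := by
            rw [Units.val_pow_eq_pow_val]
          rw [← hgup.unit_spec, ← hgpdef, this, hgpA', hA, IsUnit.unit_spec]
        rw [e1, e2]
      have hcomp2 : (g : ZMod q) ^ t = (φ a).2 := by
        have e1 : (g : ZMod q) ^ t = (g : ZMod q) ^ B := (h2 _ _).mpr htq
        have e2 : (g : ZMod q) ^ B = (φ a).2 := by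
          have : (gq : ZMod q) ^ B = ((gq ^ B : (ZMod q)ˣ) : ZMod q) := by
            rw [Units.val_pow_eq_pow_val]
          rw [← hguq.unit_spec, ← hgqdef, this, hB, IsUnit.unit_spec]
        rw [e1, e2]
      rw [hcomp1, hcomp2]
end

section
/- Let p = df+1, q = df'+1 be distinct odd primes with d = gcd(p-1,q-1), and let Ω_0, Ω_1 be the Gauss periods over D_0* and D_1*. If ff' is odd, or if ff' is even and d ≡ 0 (mod 4), then Ω_0·Ω_1 = (1 - pq)/4, so {Ω_0, Ω_1} = {(1+√(pq))/2, (1-√(pq))/2}. -/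
set_option maxHeartbeats 1000000

theorem stmt_12
    (p q : ℕ) (hp : p.Prime) (hq : q.Prime) (hop : Odd p) (hoq : Odd q)
    (hne : p ≠ q) (d : ℕ) (hd : d = Nat.gcd (p - 1) (q - 1))
    (g : ℕ) (hgp : orderOf (g : ZMod p) = p - 1) (hgq : orderOf (g : ZMod q) = q - 1)
    (x : ℕ) (hxp : (x : ZMod p) = (g : ZMod p)) (hxq : (x : ZMod q) = 1)
    (L : ℕ) (hL : L = (p - 1) * (q - 1) / d)
    (D : ℕ → Finset (ZMod (p * q)))
    (hD : D = fun i => (Finset.range L).image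
      (fun t => (g : ZMod (p * q)) ^ t * (x : ZMod (p * q)) ^ i))
    (Dstar : ℕ → Finset (ZMod (p * q)))
    (hDstar : Dstar = fun j => (Finset.range (d / 2)).biUnion (fun i => D (2 * i + j)))
    (f f' : ℕ) (hf : p - 1 = d * f) (hf' : q - 1 = d * f')
    (ω : ℂ) (hω : IsPrimitiveRoot ω (p * q))
    (Ω : ℕ → ℂ) (hΩ : Ω = fun j => ∑ a ∈ Dstar j, ω ^ (a.val))
    (hcase : Odd (f * f') ∨ (Even (f * f') ∧ d % 4 = 0)) :
    Ω 0 * Ω 1 = (1 - (p * q : ℕ)) / 4 ∧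
      ({Ω 0, Ω 1} : Set ℂ) =
        {((((1 + Real.sqrt (p * q)) / 2 : ℝ)) : ℂ), ((((1 - Real.sqrt (p * q)) / 2 : ℝ)) : ℂ)} := by
  haveI fp : Fact p.Prime := ⟨hp⟩
  haveI fq : Fact q.Prime := ⟨hq⟩
  have hp3 : 3 ≤ p := by
    rcases hop with ⟨k, hk⟩; have := hp.two_le; omega
  have hq3 : 3 ≤ q := by
    rcases hoq with ⟨k, hk⟩; have := hq.two_le; omega
  haveI : NeZero (p * q) := ⟨by positivity⟩
  have hdp : d ∣ p - 1 := hd ▸ Nat.gcd_dvd_left _ _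
  have hdq : d ∣ q - 1 := hd ▸ Nat.gcd_dvd_right _ _
  have hd2 : 2 ∣ d := by
    rw [hd]
    exact Nat.dvd_gcd (by rcases hop with ⟨k, hk⟩; omega) (by rcases hoq with ⟨k, hk⟩; omega)
  have hdpos : 0 < d := by
    rw [hd]; exact Nat.gcd_pos_of_pos_left _ (by omega)
  have hcop : Nat.Coprime p q := (Nat.coprime_primes hp hq).mpr hne
  -- the two projections
  set cp : ZMod (p * q) →+* ZMod p := ZMod.castHom (dvd_mul_right p q) _ with hcp
  set cq : ZMod (p * q) →+* ZMod q := ZMod.castHom (dvd_mul_left q p) _ with hcq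
  have hcpval : ∀ a : ZMod (p * q), cp a = (a.val : ZMod p) := by
    intro a
    rw [hcp, ZMod.castHom_apply, ← ZMod.natCast_val]
  have hcqval : ∀ a : ZMod (p * q), cq a = (a.val : ZMod q) := by
    intro a
    rw [hcq, ZMod.castHom_apply, ← ZMod.natCast_val]
  -- injectivity of the pair map
  have hinj : ∀ a b : ZMod (p * q), cp a = cp b → cq a = cq b → a = b := by
    intro a b h1 h2
    have e1 : cp (a - b) = 0 := by rw [map_sub, h1, sub_self]
    have e2 : cq (a - b) = 0 := by rw [map_sub, h2, sub_self]
    rw [hcpval, ZMod.natCast_eq_zero_iff] at e1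
    rw [hcqval, ZMod.natCast_eq_zero_iff] at e2
    have : p * q ∣ (a - b).val := Nat.Coprime.mul_dvd_of_dvd_of_dvd hcop e1 e2
    have hv : (a - b).val = 0 := Nat.eq_zero_of_dvd_of_lt this (ZMod.val_lt _)
    have : a - b = 0 := by rwa [ZMod.val_eq_zero] at hv
    linear_combination (norm := ring_nf) this
  -- the pair map is bijective
  set Φ : ZMod (p * q) → ZMod p × ZMod q := fun a => (cp a, cq a) with hΦ
  have hbij : Function.Bijective Φ := by
    rw [Fintype.bijective_iff_injective_and_card]
    constructor
    · intro a b hab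
      exact hinj a b (congrArg Prod.fst hab) (congrArg Prod.snd hab)
    · simp [ZMod.card]
  -- unit characterization
  have hunit : ∀ a : ZMod (p * q), IsUnit a ↔ cp a ≠ 0 ∧ cq a ≠ 0 := by
    intro a
    constructor
    · intro ha
      exact ⟨(ha.map cp).ne_zero, (ha.map cq).ne_zero⟩
    · rintro ⟨h1, h2⟩
      rw [hcpval, ne_eq, ZMod.natCast_eq_zero_iff] at h1
      rw [hcqval, ne_eq, ZMod.natCast_eq_zero_iff] at h2
      have hc : Nat.Coprime a.val (p * q) :=
        Nat.Coprime.mul_right ((hp.coprime_iff_not_dvd.mpr h1).symm)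
          ((hq.coprime_iff_not_dvd.mpr h2).symm)
      have := (ZMod.isUnit_iff_coprime a.val (p * q)).mpr hc
      rwa [ZMod.natCast_rightInverse a] at this
  set e : ZMod (p * q) ≃ ZMod p × ZMod q := Equiv.ofBijective Φ hbij with he
  have hesymm : ∀ y : ZMod p × ZMod q, ∀ a : ZMod (p * q), Φ a = y → e.symm y = a := by
    intro y a hay
    apply e.injective
    rw [Equiv.apply_symm_apply]
    exact ((Equiv.ofBijective_apply Φ hbij a).trans hay).symm
  -- the additive character
  set ψ : ZMod (p * q) → ℂ := fun a => ω ^ a.val with hψ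
  have hω1 : ω ^ (p * q) = 1 := hω.pow_eq_one
  have hωmod : ∀ m : ℕ, ω ^ (m % (p * q)) = ω ^ m := by
    intro m
    conv_rhs => rw [← Nat.div_add_mod m (p * q)]
    rw [pow_add, pow_mul, hω1, one_pow, one_mul]
  have hψadd : ∀ a b : ZMod (p * q), ψ (a + b) = ψ a * ψ b := by
    intro a b
    rw [hψ]
    simp only [ZMod.val_add]
    rw [hωmod, pow_add]
  have hψ0 : ψ 0 = 1 := by rw [hψ]; simp [ZMod.val_zero]
  -- component additive characters
  have hΦadd : ∀ a b : ZMod (p * q), Φ (a + b) = Φ a + Φ b := by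
    intro a b; rw [hΦ]; simp [Prod.ext_iff]
  have hΦsymm : ∀ y : ZMod p × ZMod q, Φ (e.symm y) = y := by
    intro y
    exact (e.apply_symm_apply y : e (e.symm y) = y)
  have hsymmadd : ∀ y z : ZMod p × ZMod q, e.symm (y + z) = e.symm y + e.symm z := by
    intro y z
    apply hesymm
    rw [hΦadd, hΦsymm, hΦsymm]
  set ψ1 : AddChar (ZMod p) ℂ :=
    { toFun := fun u => ψ (e.symm (u, 0))
      map_zero_eq_one' := by
        show ψ (e.symm (0, 0)) = 1
        rw [hesymm (0,0) 0 (by rw [hΦ]; simp [Prod.ext_iff]), hψ0]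
      map_add_eq_mul' := by
        intro u u'
        show ψ (e.symm (u + u', 0)) = ψ (e.symm (u, 0)) * ψ (e.symm (u', 0))
        have h1 : ((u + u' : ZMod p), (0 : ZMod q)) = (u, (0 : ZMod q)) + (u', 0) := by simp
        rw [h1, hsymmadd, hψadd] } with hψ1
  set ψ2 : AddChar (ZMod q) ℂ :=
    { toFun := fun v => ψ (e.symm (0, v))
      map_zero_eq_one' := by
        show ψ (e.symm (0, 0)) = 1
        rw [hesymm (0,0) 0 (by rw [hΦ]; simp [Prod.ext_iff]), hψ0]
      map_add_eq_mul' := by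
        intro v v'
        show ψ (e.symm (0, v + v')) = ψ (e.symm (0, v)) * ψ (e.symm (0, v'))
        have h1 : ((0 : ZMod p), (v + v' : ZMod q)) = ((0 : ZMod p), v) + (0, v') := by simp
        rw [h1, hsymmadd, hψadd] } with hψ2
  -- factorization of ψ
  have hfact : ∀ a : ZMod (p * q), ψ a = ψ1 (cp a) * ψ2 (cq a) := by
    intro a
    have h1 : ψ1 (cp a) = ψ (e.symm (cp a, 0)) := rfl
    have h2 : ψ2 (cq a) = ψ (e.symm (0, cq a)) := rfl
    rw [h1, h2, ← hψadd, ← hsymmadd]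
    congr 1
    apply (hesymm _ a ?_).symm
    rw [hΦ]; simp [Prod.ext_iff]
  -- nontriviality and primitivity of component characters
  have hq_lt : q < p * q := by nlinarith
  have hp_lt : p < p * q := by nlinarith
  have hψ1ne : ψ1 ≠ 1 := by
    intro h1
    have hb : cq ((q : ℕ) : ZMod (p * q)) = 0 := by
      rw [map_natCast, ZMod.natCast_self]
    have hb2 : ψ ((q : ℕ) : ZMod (p * q)) = 1 := by
      rw [hfact, hb, AddChar.map_zero_eq_one, mul_one, h1, AddChar.one_apply]
    rw [hψ] at hb2
    simp only [ZMod.val_natCast] at hb2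
    rw [hωmod] at hb2
    exact hω.pow_ne_one_of_pos_of_lt (by omega) hq_lt hb2
  have hψ2ne : ψ2 ≠ 1 := by
    intro h1
    have hb : cp ((p : ℕ) : ZMod (p * q)) = 0 := by
      rw [map_natCast, ZMod.natCast_self]
    have hb2 : ψ ((p : ℕ) : ZMod (p * q)) = 1 := by
      rw [hfact, hb, AddChar.map_zero_eq_one, one_mul, h1, AddChar.one_apply]
    rw [hψ] at hb2
    simp only [ZMod.val_natCast] at hb2
    rw [hωmod] at hb2
    exact hω.pow_ne_one_of_pos_of_lt (by omega) hp_lt hb2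
  have hψ1prim : ψ1.IsPrimitive := AddChar.IsPrimitive.of_ne_one hψ1ne
  have hψ2prim : ψ2.IsPrimitive := AddChar.IsPrimitive.of_ne_one hψ2ne
  -- the quadratic characters
  have hgup : IsUnit ((g : ℕ) : ZMod p) := by
    apply IsUnit.of_pow_eq_one (n := p - 1)
    · rw [← hgp]; exact pow_orderOf_eq_one _
    · omega
  have hguq : IsUnit ((g : ℕ) : ZMod q) := by
    apply IsUnit.of_pow_eq_one (n := q - 1)
    · rw [← hgq]; exact pow_orderOf_eq_one _
    · omega
  have hnsp : ¬ IsSquare ((g : ℕ) : ZMod p) := by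
    rintro ⟨b, hb⟩
    have hb0 : b ≠ 0 := by
      rintro rfl
      rw [mul_zero] at hb
      exact hgup.ne_zero hb
    have h1 : ((g : ℕ) : ZMod p) ^ ((p - 1) / 2) = 1 := by
      rw [hb, ← pow_two, ← pow_mul]
      have : 2 * ((p - 1) / 2) = p - 1 := by
        rcases hop with ⟨k, hk⟩; omega
      rw [this]
      exact ZMod.pow_card_sub_one_eq_one hb0
    have h2 := orderOf_dvd_of_pow_eq_one h1
    rw [hgp] at h2
    have := Nat.le_of_dvd (by omega) h2
    omega
  have hnsq : ¬ IsSquare ((g : ℕ) : ZMod q) := by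
    rintro ⟨b, hb⟩
    have hb0 : b ≠ 0 := by
      rintro rfl
      rw [mul_zero] at hb
      exact hguq.ne_zero hb
    have h1 : ((g : ℕ) : ZMod q) ^ ((q - 1) / 2) = 1 := by
      rw [hb, ← pow_two, ← pow_mul]
      have : 2 * ((q - 1) / 2) = q - 1 := by
        rcases hoq with ⟨k, hk⟩; omega
      rw [this]
      exact ZMod.pow_card_sub_one_eq_one hb0
    have h2 := orderOf_dvd_of_pow_eq_one h1
    rw [hgq] at h2
    have := Nat.le_of_dvd (by omega) h2
    omega
  have hχpg : quadraticChar (ZMod p) ((g : ℕ) : ZMod p) = -1 :=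
    quadraticChar_neg_one_iff_not_isSquare.mpr hnsp
  have hχqg : quadraticChar (ZMod q) ((g : ℕ) : ZMod q) = -1 :=
    quadraticChar_neg_one_iff_not_isSquare.mpr hnsq
  set χ : ZMod (p * q) → ℤ :=
    fun a => quadraticChar (ZMod p) (cp a) * quadraticChar (ZMod q) (cq a) with hχdef
  -- values of images under cp, cq
  have hcpg : ∀ t m : ℕ, cp (((g : ℕ) : ZMod (p * q)) ^ t * ((x : ℕ) : ZMod (p * q)) ^ m)
      = ((g : ℕ) : ZMod p) ^ (t + m) := by
    intro t m
    rw [map_mul, map_pow, map_pow, map_natCast, map_natCast, hxp, ← pow_add]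
  have hcqg : ∀ t m : ℕ, cq (((g : ℕ) : ZMod (p * q)) ^ t * ((x : ℕ) : ZMod (p * q)) ^ m)
      = ((g : ℕ) : ZMod q) ^ t := by
    intro t m
    rw [map_mul, map_pow, map_pow, map_natCast, map_natCast, hxq, one_pow, mul_one]
  have hχclass : ∀ t m : ℕ, χ (((g : ℕ) : ZMod (p * q)) ^ t * ((x : ℕ) : ZMod (p * q)) ^ m)
      = (-1) ^ m := by
    intro t m
    rw [hχdef]
    show quadraticChar (ZMod p) (cp _) * quadraticChar (ZMod q) (cq _) = _
    rw [hcpg, hcqg, map_pow, map_pow, hχpg, hχqg, ← pow_add]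
    have : t + m + t = 2 * t + m := by omega
    rw [this, pow_add, pow_mul, neg_one_sq, one_pow, one_mul]
  classical
  -- power equality criteria via units
  have hgpiff : ∀ a b : ℕ, ((g : ℕ) : ZMod p) ^ a = ((g : ℕ) : ZMod p) ^ b ↔ a ≡ b [MOD p - 1] := by
    intro a b
    have hcoe : (hgup.unit : ZMod p) = ((g : ℕ) : ZMod p) := hgup.unit_spec
    have horder : orderOf hgup.unit = p - 1 := by
      rw [← orderOf_units, hcoe, hgp]
    constructor
    · intro h
      have h2 : hgup.unit ^ a = hgup.unit ^ b := by
        apply Units.ext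
        simpa [hcoe] using h
      have h3 := pow_eq_pow_iff_modEq.mp h2
      rwa [horder] at h3
    · intro h
      have h2 : hgup.unit ^ a = hgup.unit ^ b :=
        pow_eq_pow_iff_modEq.mpr (by rwa [horder])
      have h3 := congrArg (Units.val) h2
      simpa [hcoe] using h3
  have hgqiff : ∀ a b : ℕ, ((g : ℕ) : ZMod q) ^ a = ((g : ℕ) : ZMod q) ^ b ↔ a ≡ b [MOD q - 1] := by
    intro a b
    have hcoe : (hguq.unit : ZMod q) = ((g : ℕ) : ZMod q) := hguq.unit_spec
    have horder : orderOf hguq.unit = q - 1 := by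
      rw [← orderOf_units, hcoe, hgq]
    constructor
    · intro h
      have h2 : hguq.unit ^ a = hguq.unit ^ b := by
        apply Units.ext
        simpa [hcoe] using h
      have h3 := pow_eq_pow_iff_modEq.mp h2
      rwa [horder] at h3
    · intro h
      have h2 : hguq.unit ^ a = hguq.unit ^ b :=
        pow_eq_pow_iff_modEq.mpr (by rwa [horder])
      have h3 := congrArg (Units.val) h2
      simpa [hcoe] using h3
  -- every nonzero element mod p is a power of g
  have hpowp : ∀ w : ZMod p, w ≠ 0 → ∃ α, ((g : ℕ) : ZMod p) ^ α = w := by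
    intro w hw
    set S : Finset (ZMod p) := (Finset.range (p - 1)).image
      (fun k => ((g : ℕ) : ZMod p) ^ k) with hS
    have hScard : S.card = p - 1 := by
      rw [hS, Finset.card_image_of_injOn, Finset.card_range]
      intro a ha b hb hab
      simp only [Finset.coe_range, Set.mem_Iio] at ha hb
      have hab2 : ((g : ℕ) : ZMod p) ^ a = ((g : ℕ) : ZMod p) ^ b := hab
      have h2 := (hgpiff a b).mp hab2
      rwa [Nat.ModEq, Nat.mod_eq_of_lt ha, Nat.mod_eq_of_lt hb] at h2
    have hSsub : S ⊆ Finset.univ \ {0} := by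
      intro b hb
      rw [hS, Finset.mem_image] at hb
      obtain ⟨k, _, rfl⟩ := hb
      simp [(hgup.pow k).ne_zero]
    have hUcard : (Finset.univ \ {0} : Finset (ZMod p)).card = p - 1 := by
      rw [Finset.card_sdiff_of_subset (by simp)]
      simp [ZMod.card]
    have hSeq : S = Finset.univ \ {0} :=
      Finset.eq_of_subset_of_card_le hSsub (by rw [hScard, hUcard])
    have hwS : w ∈ S := by rw [hSeq]; simp [hw]
    rw [hS, Finset.mem_image] at hwS
    obtain ⟨α, _, hα⟩ := hwS
    exact ⟨α, hα⟩
  have hpowq : ∀ w : ZMod q, w ≠ 0 → ∃ α, ((g : ℕ) : ZMod q) ^ α = w := by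
    intro w hw
    set S : Finset (ZMod q) := (Finset.range (q - 1)).image
      (fun k => ((g : ℕ) : ZMod q) ^ k) with hS
    have hScard : S.card = q - 1 := by
      rw [hS, Finset.card_image_of_injOn, Finset.card_range]
      intro a ha b hb hab
      simp only [Finset.coe_range, Set.mem_Iio] at ha hb
      have hab2 : ((g : ℕ) : ZMod q) ^ a = ((g : ℕ) : ZMod q) ^ b := hab
      have h2 := (hgqiff a b).mp hab2
      rwa [Nat.ModEq, Nat.mod_eq_of_lt ha, Nat.mod_eq_of_lt hb] at h2
    have hSsub : S ⊆ Finset.univ \ {0} := by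
      intro b hb
      rw [hS, Finset.mem_image] at hb
      obtain ⟨k, _, rfl⟩ := hb
      simp [(hguq.pow k).ne_zero]
    have hUcard : (Finset.univ \ {0} : Finset (ZMod q)).card = q - 1 := by
      rw [Finset.card_sdiff_of_subset (by simp)]
      simp [ZMod.card]
    have hSeq : S = Finset.univ \ {0} :=
      Finset.eq_of_subset_of_card_le hSsub (by rw [hScard, hUcard])
    have hwS : w ∈ S := by rw [hSeq]; simp [hw]
    rw [hS, Finset.mem_image] at hwS
    obtain ⟨α, _, hα⟩ := hwS
    exact ⟨α, hα⟩
  -- membership in Dstar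
  have hmem : ∀ (j : ℕ) (a : ZMod (p * q)), a ∈ Dstar j ↔
      ∃ i, i < d / 2 ∧ ∃ t, t < L ∧
        ((g : ℕ) : ZMod (p * q)) ^ t * ((x : ℕ) : ZMod (p * q)) ^ (2 * i + j) = a := by
    intro j a
    rw [hDstar, hD]
    simp [Finset.mem_biUnion, Finset.mem_image, Finset.mem_range]
  -- the set of units
  set U : Finset (ZMod (p * q)) := Finset.univ.filter (fun a => IsUnit a) with hU
  have hDsubU : ∀ j, Dstar j ⊆ U := by
    intro j a ha
    rw [hmem] at ha
    obtain ⟨i, _, t, _, rfl⟩ := ha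
    rw [hU, Finset.mem_filter]
    refine ⟨Finset.mem_univ _, ?_⟩
    rw [hunit]
    constructor
    · rw [hcpg]; exact (hgup.pow _).ne_zero
    · rw [hcqg]; exact (hguq.pow _).ne_zero
  have hχD : ∀ (j : ℕ) (a : ZMod (p * q)), a ∈ Dstar j → χ a = (-1) ^ j := by
    intro j a ha
    rw [hmem] at ha
    obtain ⟨i, _, t, _, rfl⟩ := ha
    rw [hχclass, pow_add, pow_mul, neg_one_sq, one_pow, one_mul]
  have hdisj : Disjoint (Dstar 0) (Dstar 1) := by
    rw [Finset.disjoint_left]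
    intro a h0 h1
    have e0 := hχD 0 a h0
    have e1 := hχD 1 a h1
    rw [pow_zero] at e0
    rw [pow_one] at e1
    rw [e0] at e1
    norm_num at e1
  -- surjectivity: every unit is in Dstar 0 ∪ Dstar 1
  have hUsub : U ⊆ Dstar 0 ∪ Dstar 1 := by
    intro a ha
    rw [hU, Finset.mem_filter] at ha
    have hau := ha.2
    rw [hunit] at hau
    obtain ⟨α, hα⟩ := hpowp (cp a) hau.1
    obtain ⟨β, hβ⟩ := hpowq (cq a) hau.2
    -- choose the exponent m
    obtain ⟨m, hmlt, hmcN⟩ : ∃ m, m < d ∧ m ≡ (α + β * (d - 1)) [MOD d] :=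
      ⟨(α + β * (d - 1)) % d, Nat.mod_lt _ hdpos, Nat.mod_modEq _ _⟩
    obtain ⟨c, hc⟩ := Nat.modEq_iff_dvd.mp hmcN.symm
    have hmz : (m : ℤ) = (α : ℤ) + (β : ℤ) * ((d : ℤ) - 1) + (d : ℤ) * c := by
      push_cast [Nat.cast_sub (show 1 ≤ d by omega)] at hc
      linarith
    have hpz : (p : ℤ) = (d : ℤ) * (f : ℤ) + 1 := by
      have h := congrArg (Nat.cast : ℕ → ℤ) hf
      push_cast [Nat.cast_sub (show 1 ≤ p by omega)] at h
      linarith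
    have hgcd : α + m * (p - 2) ≡ β [MOD Nat.gcd (p - 1) (q - 1)] := by
      rw [← hd, Nat.modEq_iff_dvd]
      refine ⟨-(α : ℤ) * f - (β : ℤ) * d * f + (β : ℤ) * f - (d : ℤ) * c * f + β + c, ?_⟩
      push_cast [Nat.cast_sub (show 2 ≤ p by omega)]
      rw [hmz, hpz]
      ring
    obtain ⟨t', ht'p, ht'q⟩ := Nat.chineseRemainder' hgcd
    have hLlcm : L = Nat.lcm (p - 1) (q - 1) := by rw [hL, hd]; rfl
    have hLpos : 0 < L := by
      rw [hLlcm]; exact Nat.lcm_pos (by omega) (by omega)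
    obtain ⟨t, htL, htp, htq⟩ :
        ∃ t, t < L ∧ t ≡ α + m * (p - 2) [MOD p - 1] ∧ t ≡ β [MOD q - 1] := by
      refine ⟨t' % L, Nat.mod_lt _ hLpos, ?_, ?_⟩
      · exact Nat.ModEq.trans
          (Nat.ModEq.of_dvd (by rw [hLlcm]; exact Nat.dvd_lcm_left _ _) (Nat.mod_modEq t' L))
          ht'p
      · exact Nat.ModEq.trans
          (Nat.ModEq.of_dvd (by rw [hLlcm]; exact Nat.dvd_lcm_right _ _) (Nat.mod_modEq t' L))
          ht'q
    have haeq : a = ((g : ℕ) : ZMod (p * q)) ^ t * ((x : ℕ) : ZMod (p * q)) ^ m := by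
      apply hinj
      · rw [hcpg, ← hα, hgpiff]
        have h0 : m * (p - 1) ≡ 0 [MOD p - 1] :=
          Nat.modEq_zero_iff_dvd.mpr (dvd_mul_left _ _)
        have h1 : t + m ≡ α + m * (p - 2) + m [MOD p - 1] := htp.add_right m
        have h2 : α + m * (p - 2) + m = α + m * (p - 1) := by
          rw [show p - 1 = (p - 2) + 1 by omega, Nat.mul_succ, add_assoc]
        have h3 : α + m * (p - 1) ≡ α + 0 [MOD p - 1] := Nat.ModEq.add_left α h0
        rw [h2] at h1
        have h4 := h1.trans h3
        rw [add_zero] at h4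
        exact h4.symm
      · rw [hcqg, ← hβ, hgqiff]
        exact htq.symm
    have hmlt2 : m / 2 < d / 2 := by omega
    rcases Nat.mod_two_eq_zero_or_one m with h2 | h2
    · apply Finset.mem_union_left
      rw [hmem]
      exact ⟨m / 2, hmlt2, t, htL, by rw [show 2 * (m / 2) + 0 = m by omega]; exact haeq.symm⟩
    · apply Finset.mem_union_right
      rw [hmem]
      exact ⟨m / 2, hmlt2, t, htL, by rw [show 2 * (m / 2) + 1 = m by omega]; exact haeq.symm⟩
  have hUnion : Dstar 0 ∪ Dstar 1 = U :=
    Finset.Subset.antisymm (Finset.union_subset (hDsubU 0) (hDsubU 1)) hUsub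
  -- sums of the additive characters over nonzero elements
  have hsum1p : ∑ u ∈ (Finset.univ \ {0} : Finset (ZMod p)), ψ1 u = -1 := by
    rw [Finset.sum_sdiff_eq_sub (Finset.subset_univ _), AddChar.sum_eq_zero_of_ne_one hψ1ne]
    simp
  have hsum1q : ∑ v ∈ (Finset.univ \ {0} : Finset (ZMod q)), ψ2 v = -1 := by
    rw [Finset.sum_sdiff_eq_sub (Finset.subset_univ _), AddChar.sum_eq_zero_of_ne_one hψ2ne]
    simp
  have hcpe : ∀ y : ZMod p × ZMod q, cp (e.symm y) = y.1 := by
    intro y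
    exact congrArg Prod.fst (hΦsymm y)
  have hcqe : ∀ y : ZMod p × ZMod q, cq (e.symm y) = y.2 := by
    intro y
    exact congrArg Prod.snd (hΦsymm y)
  -- the sum of ψ over the units is 1
  have hUsum : ∑ a ∈ U, ψ a = 1 := by
    have h1 : ∑ a ∈ U, ψ a =
        ∑ y ∈ ((Finset.univ \ {0}) ×ˢ (Finset.univ \ {0}) : Finset (ZMod p × ZMod q)),
          ψ1 y.1 * ψ2 y.2 := by
      refine Finset.sum_nbij' Φ e.symm ?_ ?_ ?_ ?_ ?_
      · intro a haU
        rw [hU, Finset.mem_filter] at haU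
        have h2 := (hunit a).mp haU.2
        rw [Finset.mem_product]
        constructor
        · simp only [hΦ, Finset.mem_sdiff, Finset.mem_univ, Finset.mem_singleton, true_and]
          exact h2.1
        · simp only [hΦ, Finset.mem_sdiff, Finset.mem_univ, Finset.mem_singleton, true_and]
          exact h2.2
      · intro y hy
        rw [Finset.mem_product] at hy
        simp only [Finset.mem_sdiff, Finset.mem_univ, Finset.mem_singleton, true_and] at hy
        rw [hU, Finset.mem_filter]
        refine ⟨Finset.mem_univ _, ?_⟩
        rw [hunit, hcpe, hcqe]
        exact hy
      · intro a _; exact hesymm _ a rfl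
      · intro y _; exact hΦsymm y
      · intro a _
        rw [hfact a]
    rw [h1, Finset.sum_product, ← Finset.sum_mul_sum, hsum1p, hsum1q]
    norm_num
  -- the sum Ω 0 + Ω 1
  have hsum : Ω 0 + Ω 1 = 1 := by
    rw [hΩ]
    show (Dstar 0).sum ψ + (Dstar 1).sum ψ = 1
    rw [← Finset.sum_union hdisj, hUnion, hUsum]
  -- the difference Ω 0 - Ω 1 as a complete character sum
  have h0 : ∑ a ∈ Dstar 0, (χ a : ℂ) * ψ a = ∑ a ∈ Dstar 0, ψ a :=
    Finset.sum_congr rfl (fun a ha => by rw [hχD 0 a ha]; norm_num)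
  have h1 : ∑ a ∈ Dstar 1, (χ a : ℂ) * ψ a = -∑ a ∈ Dstar 1, ψ a := by
    rw [← Finset.sum_neg_distrib]
    exact Finset.sum_congr rfl (fun a ha => by rw [hχD 1 a ha]; push_cast; ring)
  have hdiffsum : ∑ a ∈ U, (χ a : ℂ) * ψ a = Ω 0 - Ω 1 := by
    rw [← hUnion, Finset.sum_union hdisj, h0, h1, hΩ]
    show (Dstar 0).sum ψ + -(Dstar 1).sum ψ = (Dstar 0).sum ψ - (Dstar 1).sum ψ
    ring
  have hdiffall : ∑ a : ZMod (p * q), (χ a : ℂ) * ψ a = Ω 0 - Ω 1 := by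
    rw [← hdiffsum]
    symm
    apply Finset.sum_subset (Finset.subset_univ U)
    intro a _ haU
    have hnu : ¬ IsUnit a := by
      rw [hU, Finset.mem_filter] at haU
      tauto
    rw [hunit] at hnu
    have h2 : cp a = 0 ∨ cq a = 0 := by tauto
    rcases h2 with h | h
    · simp only [hχdef]
      rw [h, quadraticChar_zero]
      push_cast
      ring
    · simp only [hχdef]
      rw [h, quadraticChar_zero]
      push_cast
      ring
  -- Gauss sum factorization
  set χp' : MulChar (ZMod p) ℂ := (quadraticChar (ZMod p)).ringHomComp (Int.castRingHom ℂ)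
    with hχp'
  set χq' : MulChar (ZMod q) ℂ := (quadraticChar (ZMod q)).ringHomComp (Int.castRingHom ℂ)
    with hχq'
  have hfactor : ∑ a : ZMod (p * q), (χ a : ℂ) * ψ a = gaussSum χp' ψ1 * gaussSum χq' ψ2 := by
    have h2 : ∑ a : ZMod (p * q), (χ a : ℂ) * ψ a
        = ∑ y : ZMod p × ZMod q, (χp' y.1 * ψ1 y.1) * (χq' y.2 * ψ2 y.2) := by
      apply Fintype.sum_bijective Φ hbij
      intro a
      show (χ a : ℂ) * ψ a = (χp' (cp a) * ψ1 (cp a)) * (χq' (cq a) * ψ2 (cq a))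
      rw [hfact a]
      simp only [hχdef, hχp', hχq', MulChar.ringHomComp_apply, Int.coe_castRingHom]
      push_cast
      ring
    rw [h2]
    simp only [Fintype.sum_prod_type]
    rw [← Fintype.sum_mul_sum]
    rfl
  -- squares of the Gauss sums
  have hp2char : ringChar (ZMod p) ≠ 2 := by rw [ZMod.ringChar_zmod_n]; omega
  have hq2char : ringChar (ZMod q) ≠ 2 := by rw [ZMod.ringChar_zmod_n]; omega
  have hχp'ne : χp' ≠ 1 :=
    (MulChar.ringHomComp_ne_one_iff (RingHom.injective_int _)).mpr (quadraticChar_ne_one hp2char)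
  have hχq'ne : χq' ≠ 1 :=
    (MulChar.ringHomComp_ne_one_iff (RingHom.injective_int _)).mpr (quadraticChar_ne_one hq2char)
  have hG1 : gaussSum χp' ψ1 ^ 2 = χp' (-1) * p := by
    rw [gaussSum_sq hχp'ne ((quadraticChar_isQuadratic (ZMod p)).comp _) hψ1prim, ZMod.card]
  have hG2 : gaussSum χq' ψ2 ^ 2 = χq' (-1) * q := by
    rw [gaussSum_sq hχq'ne ((quadraticChar_isQuadratic (ZMod q)).comp _) hψ2prim, ZMod.card]
  -- the sign
  have hmod4 : (p * q) % 4 = 1 := by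
    have hp4 : p = d * f + 1 := by rw [← hf]; omega
    have hq4 : q = d * f' + 1 := by rw [← hf']; omega
    rcases hcase with hodd | ⟨_, h4⟩
    · obtain ⟨hof, hof'⟩ := Nat.odd_mul.mp hodd
      obtain ⟨ed, hde⟩ := hd2
      obtain ⟨af, haf⟩ := hof
      obtain ⟨bf, hbf⟩ := hof'
      have : p * q = 4 * (ed * ed * (2 * af + 1) * (2 * bf + 1) + ed * (af + bf + 1)) + 1 := by
        rw [hp4, hq4, hde, haf, hbf]
        ring
      omega
    · obtain ⟨cd, hcd⟩ : 4 ∣ d := Nat.dvd_of_mod_eq_zero h4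
      have : p * q = 4 * (4 * cd * cd * f * f' + cd * f + cd * f') + 1 := by
        rw [hp4, hq4, hcd]
        ring
      omega
  have hsign : χp' (-1) * χq' (-1) = 1 := by
    have h2 : quadraticChar (ZMod p) (-1) * quadraticChar (ZMod q) (-1) = 1 := by
      rw [quadraticChar_neg_one hp2char, quadraticChar_neg_one hq2char, ZMod.card, ZMod.card,
        ← map_mul, ← Nat.cast_mul, ZMod.χ₄_nat_one_mod_four hmod4]
    rw [hχp', hχq', MulChar.ringHomComp_apply, MulChar.ringHomComp_apply]
    show (((quadraticChar (ZMod p)) (-1) : ℤ) : ℂ) * (((quadraticChar (ZMod q)) (-1) : ℤ) : ℂ) = 1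
    exact_mod_cast h2
  have hsq : (Ω 0 - Ω 1) ^ 2 = ((p * q : ℕ) : ℂ) := by
    rw [← hdiffall, hfactor, mul_pow, hG1, hG2,
      show (χp' (-1) * (p : ℂ)) * (χq' (-1) * (q : ℂ))
        = (χp' (-1) * χq' (-1)) * ((p : ℂ) * (q : ℂ)) by ring,
      hsign, one_mul]
    push_cast
    ring
  -- conclusion
  have hprod : Ω 0 * Ω 1 = (1 - ((p * q : ℕ) : ℂ)) / 4 := by
    have h2 : Ω 0 * Ω 1 = ((Ω 0 + Ω 1) ^ 2 - (Ω 0 - Ω 1) ^ 2) / 4 := by ring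
    rw [h2, hsum, hsq]
    norm_num
  refine ⟨hprod, ?_⟩
  have h0r : (0 : ℝ) ≤ (p : ℝ) * q := by positivity
  have hr2 : ((Real.sqrt ((p : ℝ) * q) : ℝ) : ℂ) ^ 2 = ((p * q : ℕ) : ℂ) := by
    rw [← Complex.ofReal_pow, Real.sq_sqrt h0r]
    push_cast
    ring
  have hz : (Ω 0 - Ω 1 - ((Real.sqrt ((p : ℝ) * q) : ℝ) : ℂ))
      * (Ω 0 - Ω 1 + ((Real.sqrt ((p : ℝ) * q) : ℝ) : ℂ)) = 0 := by
    linear_combination hsq - hr2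
  have c1 : ((((1 + Real.sqrt ((p : ℝ) * q)) / 2 : ℝ)) : ℂ)
      = (1 + ((Real.sqrt ((p : ℝ) * q) : ℝ) : ℂ)) / 2 := by
    push_cast
    ring
  have c2 : ((((1 - Real.sqrt ((p : ℝ) * q)) / 2 : ℝ)) : ℂ)
      = (1 - ((Real.sqrt ((p : ℝ) * q) : ℝ) : ℂ)) / 2 := by
    push_cast
    ring
  rcases mul_eq_zero.mp hz with h | h
  · have e0 : Ω 0 = (1 + ((Real.sqrt ((p : ℝ) * q) : ℝ) : ℂ)) / 2 := by
      linear_combination (hsum + h) / 2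
    have e1 : Ω 1 = (1 - ((Real.sqrt ((p : ℝ) * q) : ℝ) : ℂ)) / 2 := by
      linear_combination (hsum - h) / 2
    rw [e0, e1, c1, c2]
  · have e0 : Ω 0 = (1 - ((Real.sqrt ((p : ℝ) * q) : ℝ) : ℂ)) / 2 := by
      linear_combination (hsum + h) / 2
    have e1 : Ω 1 = (1 + ((Real.sqrt ((p : ℝ) * q) : ℝ) : ℂ)) / 2 := by
      linear_combination (hsum - h) / 2
    rw [e0, e1, c1, c2]
    exact Set.pair_comm _ _
end

section
/- Let p = df+1, q = df'+1 be distinct odd primes with d = gcd(p-1,q-1), and let Ω_0, Ω_1 be the Gauss periods over D_0* and D_1*. If ff' is even and d ≡ 2 (mod 4), then Ω_0·Ω_1 = (1 + pq)/4, so {Ω_0, Ω_1} = {(1+√(-pq))/2, (1-√(-pq))/2}. -/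
open Finset

lemma aux_prim_ne_zero (p : ℕ) [Fact p.Prime] (g : ZMod p) (hg : orderOf g = p - 1) :
    g ≠ 0 := by
  intro h
  have h2 : 2 ≤ p := (Fact.out : p.Prime).two_le
  have := pow_orderOf_eq_one g
  rw [hg, h, zero_pow (by omega)] at this
  exact zero_ne_one this

lemma aux_not_sq (p : ℕ) [Fact p.Prime] (hop : Odd p) (g : ZMod p) (hg : orderOf g = p - 1) :
    ¬ IsSquare g := by
  rintro ⟨c, rfl⟩
  have hp2 : 2 ≤ p := (Fact.out : p.Prime).two_le
  have hp3 : 3 ≤ p := by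
    rcases Nat.lt_or_ge p 3 with h | h
    · interval_cases p
      exact absurd hop (by decide)
    · exact h
  have hc : c ≠ 0 := by
    intro h
    exact aux_prim_ne_zero p _ hg (by rw [h, mul_zero])
  have h1 : (c * c) ^ ((p - 1) / 2) = 1 := by
    rw [← pow_two, ← pow_mul]
    have h2 : 2 * ((p - 1) / 2) = p - 1 := by
      have := hop
      rw [Nat.odd_iff] at this
      omega
    rw [h2]
    exact ZMod.pow_card_sub_one_eq_one hc
  have hd := orderOf_dvd_of_pow_eq_one h1
  rw [hg] at hd
  have := Nat.le_of_dvd (by omega) hd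
  omega

lemma aux_chi4 (p q d f f' : ℕ) (hp2 : 2 ≤ p) (hq2 : 2 ≤ q)
    (hd : d = Nat.gcd (p - 1) (q - 1)) (hf : p - 1 = d * f) (hf' : q - 1 = d * f')
    (hd4 : d % 4 = 2) (hev : Even (f * f')) :
    p % 4 = 1 ∧ q % 4 = 3 ∨ p % 4 = 3 ∧ q % 4 = 1 := by
  obtain ⟨k, hk⟩ : ∃ k, d = 4 * k + 2 := ⟨d / 4, by omega⟩
  have hnot : ¬ (f % 2 = 0 ∧ f' % 2 = 0) := by
    rintro ⟨h1, h2⟩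
    obtain ⟨a, ha⟩ : ∃ a, f = 2 * a := ⟨f / 2, by omega⟩
    obtain ⟨b, hb⟩ : ∃ b, f' = 2 * b := ⟨f' / 2, by omega⟩
    have h1 : d * 2 ∣ p - 1 := ⟨a, by rw [hf, ha]; ring⟩
    have h2 : d * 2 ∣ q - 1 := ⟨b, by rw [hf', hb]; ring⟩
    have h3 := Nat.dvd_gcd h1 h2
    rw [← hd] at h3
    have := Nat.le_of_dvd (by omega) h3
    omega
  have hor : f % 2 = 0 ∨ f' % 2 = 0 := by
    rcases Nat.even_mul.mp hev with h | h <;> rw [Nat.even_iff] at h <;> omega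
  rcases hor with h | h
  · left
    obtain ⟨m, hm⟩ : ∃ m, f = 2 * m := ⟨f / 2, by omega⟩
    obtain ⟨j, hj⟩ : ∃ j, f' = 2 * j + 1 := ⟨f' / 2, by omega⟩
    have e1 : p - 1 = 4 * (2 * k * m + m) := by rw [hf, hk, hm]; ring
    have e2 : q - 1 = 4 * (2 * k * j + k + j) + 2 := by rw [hf', hk, hj]; ring
    omega
  · right
    obtain ⟨m, hm⟩ : ∃ m, f' = 2 * m := ⟨f' / 2, by omega⟩
    obtain ⟨j, hj⟩ : ∃ j, f = 2 * j + 1 := ⟨f / 2, by omega⟩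
    have e1 : q - 1 = 4 * (2 * k * m + m) := by rw [hf', hk, hm]; ring
    have e2 : p - 1 = 4 * (2 * k * j + k + j) + 2 := by rw [hf, hk, hj]; ring
    omega

theorem stmt_13
    (p q : ℕ) (hp : p.Prime) (hq : q.Prime) (hop : Odd p) (hoq : Odd q)
    (hne : p ≠ q) (d : ℕ) (hd : d = Nat.gcd (p - 1) (q - 1))
    (g : ℕ) (hgp : orderOf (g : ZMod p) = p - 1) (hgq : orderOf (g : ZMod q) = q - 1)
    (x : ℕ) (hxp : (x : ZMod p) = (g : ZMod p)) (hxq : (x : ZMod q) = 1)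
    (L : ℕ) (hL : L = (p - 1) * (q - 1) / d)
    (D : ℕ → Finset (ZMod (p * q)))
    (hD : D = fun i => (Finset.range L).image
      (fun t => (g : ZMod (p * q)) ^ t * (x : ZMod (p * q)) ^ i))
    (Dstar : ℕ → Finset (ZMod (p * q)))
    (hDstar : Dstar = fun j => (Finset.range (d / 2)).biUnion (fun i => D (2 * i + j)))
    (f f' : ℕ) (hf : p - 1 = d * f) (hf' : q - 1 = d * f')
    (ω : ℂ) (hω : IsPrimitiveRoot ω (p * q))
    (Ω : ℕ → ℂ) (hΩ : Ω = fun j => ∑ a ∈ Dstar j, ω ^ (a.val))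
    (hcase : Even (f * f') ∧ d % 4 = 2) :
    Ω 0 * Ω 1 = (1 + (p * q : ℕ)) / 4 ∧
      ({Ω 0, Ω 1} : Set ℂ) =
        {(1 + Complex.I * Real.sqrt (p * q)) / 2,
         (1 - Complex.I * Real.sqrt (p * q)) / 2} := by
  obtain ⟨hevff, hd4⟩ := hcase
  haveI instp : Fact p.Prime := ⟨hp⟩
  haveI instq : Fact q.Prime := ⟨hq⟩
  have hp2 : 2 ≤ p := hp.two_le
  have hq2 : 2 ≤ q := hq.two_le
  have hpo : p % 2 = 1 := Nat.odd_iff.mp hop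
  have hqo : q % 2 = 1 := Nat.odd_iff.mp hoq
  have hp3 : 3 ≤ p := by omega
  have hq3 : 3 ≤ q := by omega
  have hpq : Nat.Coprime p q := (Nat.coprime_primes hp hq).mpr hne
  haveI hnz : NeZero (p * q) := ⟨by positivity⟩
  have hd0 : 0 < d := by omega
  have hdp : d ∣ p - 1 := ⟨f, hf⟩
  have hdq : d ∣ q - 1 := ⟨f', hf'⟩
  have hLd : L * d = (p - 1) * (q - 1) := by
    rw [hL, Nat.div_mul_cancel (hdp.mul_right _)]
  have hL0 : 0 < L := by
    rcases Nat.eq_zero_or_pos L with h | h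
    · exfalso
      rw [h, zero_mul] at hLd
      have : 0 < (p - 1) * (q - 1) := Nat.mul_pos (by omega) (by omega)
      omega
    · exact h
  have hpdvd : p ∣ p * q := dvd_mul_right p q
  have hqdvd : q ∣ p * q := dvd_mul_left q p
  set πp : ZMod (p * q) →+* ZMod p := ZMod.castHom hpdvd (ZMod p) with hπp
  set πq : ZMod (p * q) →+* ZMod q := ZMod.castHom hqdvd (ZMod q) with hπq
  have hvalp : ∀ a : ZMod (p * q), πp a = ((a.val : ℕ) : ZMod p) := by
    intro a
    conv_lhs => rw [show a = ((a.val : ℕ) : ZMod (p * q)) by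
      rw [ZMod.natCast_val, ZMod.cast_id]]
    rw [map_natCast]
  have hvalq : ∀ a : ZMod (p * q), πq a = ((a.val : ℕ) : ZMod q) := by
    intro a
    conv_lhs => rw [show a = ((a.val : ℕ) : ZMod (p * q)) by
      rw [ZMod.natCast_val, ZMod.cast_id]]
    rw [map_natCast]
  have hω1 : ω ^ (p * q) = 1 := hω.pow_eq_one
  have hωmod : ∀ A B : ℕ, A ≡ B [MOD p * q] → ω ^ A = ω ^ B := by
    intro A B hAB
    rw [pow_eq_pow_mod A hω1, pow_eq_pow_mod B hω1]
    exact congrArg (fun k => ω ^ k) hAB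
  -- CRT idempotent data
  set c1 : ℕ := ((q : ZMod p)⁻¹).val with hc1def
  set c2 : ℕ := ((p : ZMod q)⁻¹).val with hc2def
  have hc1 : q * c1 ≡ 1 [MOD p] := by
    have h1 : ((q * c1 : ℕ) : ZMod p) = ((1 : ℕ) : ZMod p) := by
      push_cast
      rw [hc1def, ZMod.natCast_val, ZMod.cast_id]
      exact ZMod.coe_mul_inv_eq_one q hpq.symm
    exact (ZMod.natCast_eq_natCast_iff _ _ _).mp h1
  have hc2 : p * c2 ≡ 1 [MOD q] := by
    have h1 : ((p * c2 : ℕ) : ZMod q) = ((1 : ℕ) : ZMod q) := by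
      push_cast
      rw [hc2def, ZMod.natCast_val, ZMod.cast_id]
      exact ZMod.coe_mul_inv_eq_one p hpq
    exact (ZMod.natCast_eq_natCast_iff _ _ _).mp h1
  set α : ℂ := ω ^ (q * c1) with hαdef
  set β : ℂ := ω ^ (p * c2) with hβdef
  have hcop1 : Nat.Coprime c1 p := by
    rcases (Nat.coprime_or_dvd_of_prime hp c1) with h | h
    · exact h.symm
    · exfalso
      obtain ⟨m, hm⟩ := h
      have h1 : (q * c1) % p = 1 % p := hc1
      have h1p : 1 % p = 1 := Nat.mod_eq_of_lt (by omega)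
      have h0 : (q * c1) % p = 0 := by
        rw [hm, show q * (p * m) = p * (q * m) by ring]
        exact Nat.mul_mod_right p (q * m)
      omega
  have hcop2 : Nat.Coprime c2 q := by
    rcases (Nat.coprime_or_dvd_of_prime hq c2) with h | h
    · exact h.symm
    · exfalso
      obtain ⟨m, hm⟩ := h
      have h1 : (p * c2) % q = 1 % q := hc2
      have h1q : 1 % q = 1 := Nat.mod_eq_of_lt (by omega)
      have h0 : (p * c2) % q = 0 := by
        rw [hm, show p * (q * m) = q * (p * m) by ring]
        exact Nat.mul_mod_right q (p * m)
      omega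
  have hα : IsPrimitiveRoot α p := by
    have hωq : IsPrimitiveRoot (ω ^ q) p := hω.pow (by positivity) (mul_comm p q)
    rw [hαdef, mul_comm q c1, pow_mul']
    exact hωq.pow_of_coprime c1 hcop1
  have hβ : IsPrimitiveRoot β q := by
    have hωp : IsPrimitiveRoot (ω ^ p) q := hω.pow (by positivity) rfl
    rw [hβdef, mul_comm p c2, pow_mul']
    exact hωp.pow_of_coprime c2 hcop2
  have hsplit : ∀ a : ZMod (p * q), ω ^ a.val = α ^ (πp a).val * β ^ (πq a).val := by
    intro a
    rw [hαdef, hβdef, ← pow_mul, ← pow_mul, ← pow_add]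
    apply hωmod
    have e1 : (πp a).val = a.val % p := by rw [hvalp, ZMod.val_natCast]
    have e2 : (πq a).val = a.val % q := by rw [hvalq, ZMod.val_natCast]
    rw [e1, e2]
    rw [← Nat.modEq_and_modEq_iff_modEq_mul hpq]
    constructor
    · have h1 : q * c1 * (a.val % p) ≡ 1 * (a.val % p) [MOD p] := hc1.mul_right _
      have h2 : p * c2 * (a.val % q) ≡ 0 [MOD p] :=
        (Nat.modEq_zero_iff_dvd).mpr ⟨c2 * (a.val % q), by ring⟩
      have h3 := (h1.add h2).symm
      rw [one_mul, add_zero] at h3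
      exact (Nat.mod_modEq a.val p).symm.trans h3
    · have h1 : p * c2 * (a.val % q) ≡ 1 * (a.val % q) [MOD q] := hc2.mul_right _
      have h2 : q * c1 * (a.val % p) ≡ 0 [MOD q] :=
        (Nat.modEq_zero_iff_dvd).mpr ⟨c1 * (a.val % p), by ring⟩
      have h3 := (h2.add h1).symm
      rw [one_mul, zero_add] at h3
      exact (Nat.mod_modEq a.val q).symm.trans h3
  have hker : ∀ a : ZMod (p * q), πp a = 0 → πq a = 0 → a = 0 := by
    intro a h1 h2
    rw [hvalp] at h1
    rw [hvalq] at h2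
    rw [ZMod.natCast_eq_zero_iff] at h1 h2
    have hdvd : p * q ∣ a.val := Nat.Coprime.mul_dvd_of_dvd_of_dvd hpq h1 h2
    have hlt : a.val < p * q := ZMod.val_lt a
    have hv0 : a.val = 0 := by
      rcases Nat.eq_zero_or_pos a.val with h | h
      · exact h
      · exact absurd (Nat.le_of_dvd h hdvd) (by omega)
    have := ZMod.val_cast_of_lt (show 0 < p * q from by positivity)
    rw [← ZMod.val_eq_zero]
    exact hv0
  have hbij : Function.Bijective (fun a : ZMod (p * q) => (πp a, πq a)) := by
    rw [Fintype.bijective_iff_injective_and_card]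
    refine ⟨?_, by simp [ZMod.card]⟩
    intro a b hab
    simp only [Prod.mk.injEq] at hab
    have h1 : πp (a - b) = 0 := by rw [map_sub, hab.1, sub_self]
    have h2 : πq (a - b) = 0 := by rw [map_sub, hab.2, sub_self]
    exact sub_eq_zero.mp (hker _ h1 h2)
  -- characters
  set χp : MulChar (ZMod p) ℂ := (quadraticChar (ZMod p)).ringHomComp (Int.castRingHom ℂ)
    with hχpdef
  set χq : MulChar (ZMod q) ℂ := (quadraticChar (ZMod q)).ringHomComp (Int.castRingHom ℂ)
    with hχqdef
  set ψp : AddChar (ZMod p) ℂ := AddChar.zmodChar p hα.pow_eq_one with hψpdef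
  set ψq : AddChar (ZMod q) ℂ := AddChar.zmodChar q hβ.pow_eq_one with hψqdef
  have hψpapp : ∀ u : ZMod p, ψp u = α ^ u.val := fun u => rfl
  have hψqapp : ∀ v : ZMod q, ψq v = β ^ v.val := fun v => rfl
  have hχp_ne : χp ≠ 1 := by
    rw [hχpdef]
    exact (MulChar.ringHomComp_ne_one_iff (Int.cast_injective)).mpr
      (quadraticChar_ne_one (by rw [ZMod.ringChar_zmod_n]; omega))
  have hχq_ne : χq ≠ 1 := by
    rw [hχqdef]
    exact (MulChar.ringHomComp_ne_one_iff (Int.cast_injective)).mpr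
      (quadraticChar_ne_one (by rw [ZMod.ringChar_zmod_n]; omega))
  have hψp_prim : ψp.IsPrimitive :=
    AddChar.zmodChar_primitive_of_primitive_root p hα
  have hψq_prim : ψq.IsPrimitive :=
    AddChar.zmodChar_primitive_of_primitive_root q hβ
  have hGp : gaussSum χp ψp ^ 2 = χp (-1) * (p : ℂ) := by
    have h := gaussSum_sq hχp_ne (by rw [hχpdef]; exact
      (quadraticChar_isQuadratic (ZMod p)).comp _) hψp_prim
    rwa [ZMod.card] at h
  have hGq : gaussSum χq ψq ^ 2 = χq (-1) * (q : ℂ) := by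
    have h := gaussSum_sq hχq_ne (by rw [hχqdef]; exact
      (quadraticChar_isQuadratic (ZMod q)).comp _) hψq_prim
    rwa [ZMod.card] at h
  have hSgauss : (∑ a : ZMod (p * q), χp (πp a) * χq (πq a) * ω ^ a.val)
      = gaussSum χp ψp * gaussSum χq ψq := by
    calc (∑ a : ZMod (p * q), χp (πp a) * χq (πq a) * ω ^ a.val)
        = ∑ uv : ZMod p × ZMod q, χp uv.1 * ψp uv.1 * (χq uv.2 * ψq uv.2) :=
          Fintype.sum_bijective _ hbij _
            (fun uv : ZMod p × ZMod q => χp uv.1 * ψp uv.1 * (χq uv.2 * ψq uv.2))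
            (fun a => by
              show χp (πp a) * χq (πq a) * ω ^ a.val
                  = χp (πp a) * ψp (πp a) * (χq (πq a) * ψq (πq a))
              rw [hsplit a, hψpapp, hψqapp]; ring)
      _ = ∑ u : ZMod p, ∑ v : ZMod q, (χp u * ψp u) * (χq v * ψq v) :=
          Fintype.sum_prod_type _
      _ = gaussSum χp ψp * gaussSum χq ψq := (Finset.sum_mul_sum _ _ _ _).symm
  -- the unit set
  set U : Finset (ZMod (p * q)) := Finset.univ.filter (fun a => πp a ≠ 0 ∧ πq a ≠ 0) with hUdef
  haveI : Fact (1 < p) := ⟨by omega⟩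
  haveI : Fact (1 < q) := ⟨by omega⟩
  have hψp_ne : ψp ≠ 1 := by
    intro h
    have h2 : ψp (1 : ZMod p) = 1 := by rw [h]; exact AddChar.one_apply _
    rw [hψpapp, ZMod.val_one, pow_one] at h2
    exact hα.ne_one (by omega) h2
  have hψq_ne : ψq ≠ 1 := by
    intro h
    have h2 : ψq (1 : ZMod q) = 1 := by rw [h]; exact AddChar.one_apply _
    rw [hψqapp, ZMod.val_one, pow_one] at h2
    exact hβ.ne_one (by omega) h2
  have hsum0p : (∑ u : ZMod p, α ^ u.val) = 0 := by
    have h := AddChar.sum_eq_zero_of_ne_one hψp_ne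
    calc (∑ u : ZMod p, α ^ u.val) = ∑ u : ZMod p, ψp u :=
          Finset.sum_congr rfl fun u _ => (hψpapp u).symm
      _ = 0 := h
  have hsum0q : (∑ v : ZMod q, β ^ v.val) = 0 := by
    have h := AddChar.sum_eq_zero_of_ne_one hψq_ne
    calc (∑ v : ZMod q, β ^ v.val) = ∑ v : ZMod q, ψq v :=
          Finset.sum_congr rfl fun v _ => (hψqapp v).symm
      _ = 0 := h
  have hitep : (∑ u : ZMod p, if u = 0 then (0 : ℂ) else α ^ u.val) = -1 := by
    have h2 : (∑ u : ZMod p, if u = 0 then α ^ u.val else 0) = 1 := by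
      rw [Finset.sum_ite_eq' Finset.univ (0 : ZMod p) (fun u => α ^ u.val)]
      simp [ZMod.val_zero]
    have h3 : (∑ u : ZMod p, if u = 0 then (0 : ℂ) else α ^ u.val)
        = (∑ u : ZMod p, α ^ u.val) - (∑ u : ZMod p, if u = 0 then α ^ u.val else 0) := by
      rw [← Finset.sum_sub_distrib]
      refine Finset.sum_congr rfl fun u _ => ?_
      by_cases h : u = 0 <;> simp [h]
    rw [h3, hsum0p, h2]
    norm_num
  have hiteq : (∑ v : ZMod q, if v = 0 then (0 : ℂ) else β ^ v.val) = -1 := by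
    have h2 : (∑ v : ZMod q, if v = 0 then β ^ v.val else 0) = 1 := by
      rw [Finset.sum_ite_eq' Finset.univ (0 : ZMod q) (fun v => β ^ v.val)]
      simp [ZMod.val_zero]
    have h3 : (∑ v : ZMod q, if v = 0 then (0 : ℂ) else β ^ v.val)
        = (∑ v : ZMod q, β ^ v.val) - (∑ v : ZMod q, if v = 0 then β ^ v.val else 0) := by
      rw [← Finset.sum_sub_distrib]
      refine Finset.sum_congr rfl fun v _ => ?_
      by_cases h : v = 0 <;> simp [h]
    rw [h3, hsum0q, h2]
    norm_num
  have hsumU : (∑ a ∈ U, ω ^ a.val) = 1 := by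
    have e1 : (∑ a ∈ U, ω ^ a.val)
        = ∑ a : ZMod (p * q), (if πp a = 0 then (0 : ℂ) else α ^ (πp a).val) *
            (if πq a = 0 then (0 : ℂ) else β ^ (πq a).val) := by
      rw [hUdef, Finset.sum_filter]
      refine Finset.sum_congr rfl fun a _ => ?_
      by_cases h1 : πp a = 0 <;> by_cases h2 : πq a = 0 <;>
        simp [h1, h2, hsplit a]
    rw [e1]
    calc (∑ a : ZMod (p * q), (if πp a = 0 then (0 : ℂ) else α ^ (πp a).val) *
            (if πq a = 0 then (0 : ℂ) else β ^ (πq a).val))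
        = ∑ uv : ZMod p × ZMod q, (if uv.1 = 0 then (0 : ℂ) else α ^ uv.1.val) *
            (if uv.2 = 0 then (0 : ℂ) else β ^ uv.2.val) :=
          Fintype.sum_bijective _ hbij _ _ (fun a => rfl)
      _ = ∑ u : ZMod p, ∑ v : ZMod q, (if u = 0 then (0 : ℂ) else α ^ u.val) *
            (if v = 0 then (0 : ℂ) else β ^ v.val) := Fintype.sum_prod_type _
      _ = (∑ u : ZMod p, if u = 0 then (0 : ℂ) else α ^ u.val) *
            (∑ v : ZMod q, if v = 0 then (0 : ℂ) else β ^ v.val) :=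
          (Finset.sum_mul_sum _ _ _ _).symm
      _ = 1 := by rw [hitep, hiteq]; norm_num
  have hcardU : U.card = (p - 1) * (q - 1) := by
    have hcV : ((Finset.univ.filter (fun u : ZMod p => u ≠ 0)) ×ˢ
        (Finset.univ.filter (fun v : ZMod q => v ≠ 0))).card = (p - 1) * (q - 1) := by
      rw [Finset.card_product, Finset.filter_ne', Finset.filter_ne',
        Finset.card_erase_of_mem (Finset.mem_univ _),
        Finset.card_erase_of_mem (Finset.mem_univ _)]
      simp [ZMod.card]
    rw [← hcV]
    apply Finset.card_nbij (i := fun a => (πp a, πq a))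
    · intro a ha
      rw [hUdef] at ha
      simp only [Finset.mem_coe, Finset.mem_filter, Finset.mem_univ, true_and] at ha
      simp only [Finset.mem_coe, Finset.mem_product, Finset.mem_filter, Finset.mem_univ,
        true_and]
      exact ha
    · exact hbij.1.injOn
    · intro uv huv
      simp only [Finset.coe_product, Set.mem_prod, Finset.mem_coe, Finset.mem_filter,
        Finset.mem_univ, true_and] at huv
      obtain ⟨a, ha⟩ := hbij.2 uv
      refine ⟨a, ?_, ha⟩
      simp only [Finset.mem_coe, hUdef, Finset.mem_filter, Finset.mem_univ, true_and]
      have hfst : πp a = uv.1 := by rw [← ha]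
      have hsnd : πq a = uv.2 := by rw [← ha]
      exact ⟨by rw [hfst]; exact huv.1, by rw [hsnd]; exact huv.2⟩
  -- Whiteman structure
  have hgp0 : (g : ZMod p) ≠ 0 := aux_prim_ne_zero p _ hgp
  have hgq0 : (g : ZMod q) ≠ 0 := aux_prim_ne_zero q _ hgq
  have hmemU : ∀ s i : ℕ, ((g : ZMod (p * q)) ^ s * (x : ZMod (p * q)) ^ i) ∈ U := by
    intro s i
    rw [hUdef, Finset.mem_filter]
    refine ⟨Finset.mem_univ _, ?_, ?_⟩
    · simp only [map_mul, map_pow, map_natCast, hxp]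
      exact mul_ne_zero (pow_ne_zero _ hgp0) (pow_ne_zero _ hgp0)
    · simp only [map_mul, map_pow, map_natCast, hxq, one_pow, mul_one]
      exact pow_ne_zero _ hgq0
  -- injectivity of powers mod p and mod q
  have hgp1 : (g : ZMod p) ^ (p - 1) = 1 := by rw [← hgp]; exact pow_orderOf_eq_one _
  have hgq1 : (g : ZMod q) ^ (q - 1) = 1 := by rw [← hgq]; exact pow_orderOf_eq_one _
  have hup : IsUnit (g : ZMod p) := IsUnit.of_pow_eq_one hgp1 (by omega)
  have huq : IsUnit (g : ZMod q) := IsUnit.of_pow_eq_one hgq1 (by omega)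
  have hpowp : ∀ m k : ℕ, (g : ZMod p) ^ m = (g : ZMod p) ^ k → m ≡ k [MOD p - 1] := by
    intro m k h
    have hu : (hup.unit : ZMod p) = (g : ZMod p) := hup.unit_spec
    have h' : hup.unit ^ m = hup.unit ^ k := Units.ext (by
      rw [Units.val_pow_eq_pow_val, Units.val_pow_eq_pow_val, hu]; exact h)
    have h2 := pow_eq_pow_iff_modEq.mp h'
    rwa [← orderOf_units, hu, hgp] at h2
  have hpowq : ∀ m k : ℕ, (g : ZMod q) ^ m = (g : ZMod q) ^ k → m ≡ k [MOD q - 1] := by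
    intro m k h
    have hu : (huq.unit : ZMod q) = (g : ZMod q) := huq.unit_spec
    have h' : huq.unit ^ m = huq.unit ^ k := Units.ext (by
      rw [Units.val_pow_eq_pow_val, Units.val_pow_eq_pow_val, hu]; exact h)
    have h2 := pow_eq_pow_iff_modEq.mp h'
    rwa [← orderOf_units, hu, hgq] at h2
  have hlcm : Nat.lcm (p - 1) (q - 1) = L := by
    have h1 := Nat.gcd_mul_lcm (p - 1) (q - 1)
    rw [← hd] at h1
    have h2 : d * Nat.lcm (p - 1) (q - 1) = d * L := by
      rw [h1, ← hLd]; ring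
    exact Nat.eq_of_mul_eq_mul_left hd0 h2
  have hinj : Set.InjOn (fun si : ℕ × ℕ => (g : ZMod (p * q)) ^ si.1 * (x : ZMod (p * q)) ^ si.2)
      ((Finset.range L ×ˢ Finset.range d) : Finset (ℕ × ℕ)) := by
    rintro ⟨s, i⟩ hsi ⟨s', i'⟩ hsi' hEq
    simp only [Finset.coe_product, Set.mem_prod, Finset.mem_coe, Finset.mem_range] at hsi hsi'
    obtain ⟨hs, hi⟩ := hsi
    obtain ⟨hs', hi'⟩ := hsi'
    simp only at hEq
    have hpp : (g : ZMod p) ^ (s + i) = (g : ZMod p) ^ (s' + i') := by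
      have h := congrArg πp hEq
      simpa [map_mul, map_pow, map_natCast, hxp, pow_add] using h
    have hqq : (g : ZMod q) ^ s = (g : ZMod q) ^ s' := by
      have h := congrArg πq hEq
      simpa [map_mul, map_pow, map_natCast, hxq] using h
    have m1 : s + i ≡ s' + i' [MOD p - 1] := hpowp _ _ hpp
    have m2 : s ≡ s' [MOD q - 1] := hpowq _ _ hqq
    have m1d : s + i ≡ s' + i' [MOD d] := Nat.ModEq.of_dvd hdp m1
    have m2d : s ≡ s' [MOD d] := Nat.ModEq.of_dvd hdq m2
    have mid : i ≡ i' [MOD d] := by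
      have h4 : s + i ≡ s + i' [MOD d] := m1d.trans ((m2d.add_right i').symm)
      exact Nat.ModEq.add_left_cancel' s h4
    have hii : i = i' := by
      have h5 : i % d = i' % d := mid
      rw [Nat.mod_eq_of_lt hi, Nat.mod_eq_of_lt hi'] at h5
      exact h5
    subst hii
    have m3 : s ≡ s' [MOD p - 1] := (Nat.ModEq.add_right_cancel' i m1)
    have hdvd1 : ((p - 1 : ℕ) : ℤ) ∣ (s' : ℤ) - (s : ℤ) := (Nat.modEq_iff_dvd).mp m3
    have hdvd2 : ((q - 1 : ℕ) : ℤ) ∣ (s' : ℤ) - (s : ℤ) := (Nat.modEq_iff_dvd).mp m2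
    have hl : ((Nat.lcm (p - 1) (q - 1) : ℕ) : ℤ) ∣ (s' : ℤ) - (s : ℤ) := by
      have h6 := Int.coe_lcm_dvd hdvd1 hdvd2
      have h7 : Int.lcm ((p - 1 : ℕ) : ℤ) ((q - 1 : ℕ) : ℤ) = Nat.lcm (p - 1) (q - 1) := by
        rw [Int.lcm]
        simp [Int.natAbs_natCast]
      rwa [h7] at h6
    rw [hlcm] at hl
    have m4 : s ≡ s' [MOD L] := (Nat.modEq_iff_dvd).mpr hl
    have hss : s = s' := by
      have h5 : s % L = s' % L := m4
      rw [Nat.mod_eq_of_lt hs, Nat.mod_eq_of_lt hs'] at h5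
      exact h5
    subst hss
    rfl
  have hFimg : (Finset.range L ×ˢ Finset.range d).image
      (fun si : ℕ × ℕ => (g : ZMod (p * q)) ^ si.1 * (x : ZMod (p * q)) ^ si.2) = U := by
    apply Finset.eq_of_subset_of_card_le
    · intro a ha
      simp only [Finset.mem_image, Finset.mem_product, Finset.mem_range] at ha
      obtain ⟨⟨s, i⟩, ⟨hs, hi⟩, rfl⟩ := ha
      exact hmemU s i
    · rw [hcardU, Finset.card_image_of_injOn hinj, Finset.card_product,
        Finset.card_range, Finset.card_range]
      omega
  have hχg_p : χp ((g : ZMod p)) = -1 := by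
    have h1 : quadraticChar (ZMod p) ((g : ZMod p)) = -1 :=
      quadraticChar_neg_one_iff_not_isSquare.mpr (aux_not_sq p hop _ hgp)
    rw [hχpdef, MulChar.ringHomComp_apply, h1]
    norm_num
  have hχg_q : χq ((g : ZMod q)) = -1 := by
    have h1 : quadraticChar (ZMod q) ((g : ZMod q)) = -1 :=
      quadraticChar_neg_one_iff_not_isSquare.mpr (aux_not_sq q hoq _ hgq)
    rw [hχqdef, MulChar.ringHomComp_apply, h1]
    norm_num
  have hχval : ∀ (t i : ℕ),
      χp (πp ((g : ZMod (p * q)) ^ t * (x : ZMod (p * q)) ^ i)) *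
      χq (πq ((g : ZMod (p * q)) ^ t * (x : ZMod (p * q)) ^ i)) = (-1) ^ i := by
    intro t i
    simp only [map_mul, map_pow, map_natCast, hxp, hxq]
    rw [hχg_p, hχg_q, map_one]
    have ht1 : ((-1 : ℂ)) ^ t * (-1) ^ t = 1 := by
      rw [← mul_pow]; norm_num
    calc ((-1 : ℂ)) ^ t * (-1) ^ i * ((-1) ^ t * 1 ^ i)
        = ((-1 : ℂ) ^ t * (-1) ^ t) * (-1) ^ i := by ring
      _ = (-1) ^ i := by rw [ht1, one_mul]
  have hmemD : ∀ i a, a ∈ D i → ∃ t, t < L ∧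
      a = (g : ZMod (p * q)) ^ t * (x : ZMod (p * q)) ^ i := by
    intro i a ha
    rw [hD] at ha
    simp only [Finset.mem_image, Finset.mem_range] at ha
    obtain ⟨t, ht, rfl⟩ := ha
    exact ⟨t, ht, rfl⟩
  have hDstar_sub : ∀ j a, a ∈ Dstar j → a ∈ U ∧ χp (πp a) * χq (πq a) = (-1) ^ j := by
    intro j a ha
    rw [hDstar] at ha
    simp only [Finset.mem_biUnion, Finset.mem_range] at ha
    obtain ⟨k, hk, haD⟩ := ha
    obtain ⟨t, ht, rfl⟩ := hmemD _ _ haD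
    refine ⟨hmemU t _, ?_⟩
    rw [hχval t (2 * k + j), pow_add, pow_mul]
    norm_num
  have hUsub : ∀ a ∈ U, a ∈ Dstar 0 ∪ Dstar 1 := by
    intro a ha
    rw [← hFimg] at ha
    simp only [Finset.mem_image, Finset.mem_product, Finset.mem_range] at ha
    obtain ⟨⟨s, i⟩, ⟨hs, hi⟩, rfl⟩ := ha
    have hd2 : d % 2 = 0 := by omega
    rcases Nat.even_or_odd i with he | ho
    · obtain ⟨k, hk⟩ := he
      apply Finset.mem_union_left
      rw [hDstar]
      simp only [Finset.mem_biUnion, Finset.mem_range]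
      refine ⟨k, by omega, ?_⟩
      rw [hD]
      simp only [Finset.mem_image, Finset.mem_range]
      exact ⟨s, hs, by rw [show 2 * k + 0 = i by omega]⟩
    · obtain ⟨k, hk⟩ := ho
      apply Finset.mem_union_right
      rw [hDstar]
      simp only [Finset.mem_biUnion, Finset.mem_range]
      refine ⟨k, by omega, ?_⟩
      rw [hD]
      simp only [Finset.mem_image, Finset.mem_range]
      exact ⟨s, hs, by rw [show 2 * k + 1 = i by omega]⟩
  have hdisj : Disjoint (Dstar 0) (Dstar 1) := by
    rw [Finset.disjoint_left]
    intro a h0 h1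
    have e0 := (hDstar_sub 0 a h0).2
    have e1 := (hDstar_sub 1 a h1).2
    have := e0.symm.trans e1
    norm_num at this
  have hunion : Dstar 0 ∪ Dstar 1 = U := by
    apply Finset.Subset.antisymm
    · intro a ha
      rcases Finset.mem_union.mp ha with h | h
      · exact (hDstar_sub 0 a h).1
      · exact (hDstar_sub 1 a h).1
    · intro a ha
      exact hUsub a ha
  have hΩadd : Ω 0 + Ω 1 = 1 := by
    rw [hΩ]
    simp only
    rw [← Finset.sum_union hdisj, hunion, hsumU]
  set S : ℂ := gaussSum χp ψp * gaussSum χq ψq with hSdef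
  have hΩsub : Ω 0 - Ω 1 = S := by
    rw [hΩ]
    simp only
    have h0 : (∑ a ∈ Dstar 0, ω ^ a.val)
        = ∑ a ∈ Dstar 0, χp (πp a) * χq (πq a) * ω ^ a.val :=
      Finset.sum_congr rfl fun a ha => by
        rw [(hDstar_sub 0 a ha).2, pow_zero, one_mul]
    have h1 : (∑ a ∈ Dstar 1, ω ^ a.val)
        = -∑ a ∈ Dstar 1, χp (πp a) * χq (πq a) * ω ^ a.val := by
      rw [← Finset.sum_neg_distrib]
      refine Finset.sum_congr rfl fun a ha => ?_
      rw [(hDstar_sub 1 a ha).2, pow_one]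
      ring
    rw [h0, h1, sub_neg_eq_add, ← Finset.sum_union hdisj, hunion, ← hSgauss]
    apply Finset.sum_subset (Finset.subset_univ U)
    intro a _ haU
    rw [hUdef] at haU
    simp only [Finset.mem_filter, Finset.mem_univ, true_and, not_and_or, not_not] at haU
    rcases haU with h | h
    · rw [h, MulChar.map_zero]
      ring
    · rw [h, MulChar.map_zero]
      ring
  have hSsq : S ^ 2 = -((p : ℂ) * q) := by
    rw [hSdef, mul_pow, hGp, hGq]
    have hrp : ringChar (ZMod p) ≠ 2 := by rw [ZMod.ringChar_zmod_n]; omega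
    have hrq : ringChar (ZMod q) ≠ 2 := by rw [ZMod.ringChar_zmod_n]; omega
    have hcp : χp (-1) = ((ZMod.χ₄ ((p : ℕ) : ZMod 4) : ℤ) : ℂ) := by
      rw [hχpdef, MulChar.ringHomComp_apply, quadraticChar_neg_one hrp, ZMod.card]
      norm_num
    have hcq : χq (-1) = ((ZMod.χ₄ ((q : ℕ) : ZMod 4) : ℤ) : ℂ) := by
      rw [hχqdef, MulChar.ringHomComp_apply, quadraticChar_neg_one hrq, ZMod.card]
      norm_num
    rcases aux_chi4 p q d f f' hp2 hq2 hd hf hf' hd4 hevff with ⟨h1, h2⟩ | ⟨h1, h2⟩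
    · have e1 : χp (-1) = 1 := by
        rw [hcp, ZMod.χ₄_nat_one_mod_four h1]; norm_num
      have e2 : χq (-1) = -1 := by
        rw [hcq, ZMod.χ₄_nat_three_mod_four h2]; norm_num
      rw [e1, e2]
      ring
    · have e1 : χp (-1) = -1 := by
        rw [hcp, ZMod.χ₄_nat_three_mod_four h1]; norm_num
      have e2 : χq (-1) = 1 := by
        rw [hcq, ZMod.χ₄_nat_one_mod_four h2]; norm_num
      rw [e1, e2]
      ring
  have hΩ0 : Ω 0 = (1 + S) / 2 := by
    have h := hΩadd
    have h2 := hΩsub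
    linear_combination h / 2 + h2 / 2
  have hΩ1 : Ω 1 = (1 - S) / 2 := by
    linear_combination hΩadd / 2 - hΩsub / 2
  constructor
  · have hprod : Ω 0 * Ω 1 = (1 - S ^ 2) / 4 := by
      rw [hΩ0, hΩ1]; ring
    rw [hprod, hSsq]
    push_cast
    ring
  · have hpq0 : (0 : ℝ) ≤ (p : ℝ) * q := by positivity
    have ht2 : ((Real.sqrt ((p : ℝ) * q) : ℝ) : ℂ) ^ 2 = (p : ℂ) * q := by
      rw [← Complex.ofReal_pow, Real.sq_sqrt hpq0]
      push_cast
      ring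
    have hfac : (S - Complex.I * Real.sqrt ((p : ℝ) * q)) *
        (S + Complex.I * Real.sqrt ((p : ℝ) * q)) = 0 := by
      have hI : (Complex.I : ℂ) ^ 2 = -1 := Complex.I_sq
      have : (S - Complex.I * Real.sqrt ((p : ℝ) * q)) *
          (S + Complex.I * Real.sqrt ((p : ℝ) * q))
          = S ^ 2 - Complex.I ^ 2 * ((Real.sqrt ((p : ℝ) * q) : ℂ)) ^ 2 := by ring
      rw [this, hSsq, hI, ht2]
      ring
    rcases mul_eq_zero.mp hfac with h | h
    · have hSval : S = Complex.I * Real.sqrt ((p : ℝ) * q) := sub_eq_zero.mp h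
      have e0 : Ω 0 = (1 + Complex.I * Real.sqrt ((p : ℝ) * q)) / 2 := by
        rw [hΩ0, hSval]
      have e1 : Ω 1 = (1 - Complex.I * Real.sqrt ((p : ℝ) * q)) / 2 := by
        rw [hΩ1, hSval]
      rw [e0, e1]
    · have hSval : S = -(Complex.I * Real.sqrt ((p : ℝ) * q)) := by linear_combination h
      have e0 : Ω 0 = (1 - Complex.I * Real.sqrt ((p : ℝ) * q)) / 2 := by
        rw [hΩ0, hSval]; ring
      have e1 : Ω 1 = (1 + Complex.I * Real.sqrt ((p : ℝ) * q)) / 2 := by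
        rw [hΩ1, hSval]; ring
      rw [e0, e1, Set.pair_comm]
end

section
/- Let {s_i} be the modified Jacobi sequence of period N = pq, ω = e^{2πi/N}, and S(x) = Σ_{i=0}^{N-1} s_i x^i. If a ∈ P = {p, 2p, ..., (q-1)p}, then S(ω^a) = -(p+1)/2, and if a ∈ Q = {q, 2q, ..., (p-1)q}, then S(ω^a) = (q-1)/2. -/
open Finset

/-- Powers of a root of unity only depend on the exponent mod N. -/
lemma aux_pow_congr (ω : ℂ) (N : ℕ) (h1 : ω ^ N = 1) {m n : ℕ}
    (h : m ≡ n [MOD N]) : ω ^ m = ω ^ n := by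
  have e : ∀ k : ℕ, ω ^ k = ω ^ (k % N) := by
    intro k
    conv_lhs => rw [← Nat.div_add_mod k N]
    rw [pow_add, pow_mul, h1, one_pow, one_mul]
  rw [e m, e n, h]

/-- Sum of a function with period r over range (n*r). -/
lemma aux_sum_periodic {M : Type*} [AddCommMonoid M] (f : ℕ → M) (n r : ℕ)
    (hf : ∀ t, f (t + r) = f t) :
    ∑ t ∈ range (n * r), f t = n • ∑ t ∈ range r, f t := by
  have hshift : ∀ u i, f (u * r + i) = f i := by
    intro u
    induction u with
    | zero => simp
    | succ u ih =>
      intro i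
      have : (u + 1) * r + i = (u * r + i) + r := by ring
      rw [this, hf, ih]
  induction n with
  | zero => simp
  | succ n ih =>
    rw [add_mul, one_mul, Finset.sum_range_add, ih, succ_nsmul]
    congr 1
    exact Finset.sum_congr rfl fun i _ => hshift n i

/-- Sum over ZMod M equals sum over range M. -/
lemma aux_sum_zmod {M : Type*} [AddCommMonoid M] (N : ℕ) [NeZero N] (f : ZMod N → M) :
    ∑ c : ZMod N, f c = ∑ i ∈ range N, f (i : ZMod N) := by
  have hinj : Set.InjOn (fun i : ℕ => (i : ZMod N)) (range N) := by
    intro i hi j hj hij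
    have := congrArg ZMod.val hij
    rwa [ZMod.val_natCast_of_lt (mem_range.mp hi),
      ZMod.val_natCast_of_lt (mem_range.mp hj)] at this
  have himg : (range N).image (fun i : ℕ => (i : ZMod N)) = Finset.univ := by
    apply Finset.eq_univ_of_card
    rw [Finset.card_image_of_injOn hinj, card_range, ZMod.card]
  rw [← himg, Finset.sum_image hinj]

lemma aux_pow_modEq {F : Type*} [MonoidWithZero F] [IsCancelMulZero F] {g : F} (hg : g ≠ 0)
    {a b : ℕ} (h : g ^ a = g ^ b) : a ≡ b [MOD orderOf g] := by
  wlog hab : a ≤ b generalizing a b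
  · exact (this h.symm (le_of_not_ge hab)).symm
  obtain ⟨k, rfl⟩ := Nat.exists_eq_add_of_le hab
  rw [pow_add] at h
  nth_rewrite 1 [← mul_one (g ^ a)] at h
  have hk : g ^ k = 1 := (mul_left_cancel₀ (pow_ne_zero a hg) h).symm
  have : orderOf g ∣ k := orderOf_dvd_of_pow_eq_one hk
  exact (Nat.modEq_iff_dvd' (Nat.le_add_right a k)).mpr (by simpa using this)

/-- Full multiplicative character-type sum: `∑_{t<q-1} ζ^{(k g^t).val} = -1`. -/
lemma aux_char_sum (q : ℕ) (hq : q.Prime) (ζ : ℂ) (hζq : ζ ^ q = 1) (hζ1 : ζ ≠ 1)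
    (g : ℕ) (hg : orderOf (g : ZMod q) = q - 1) (k : ℕ) (hk : ¬ q ∣ k) :
    ∑ t ∈ range (q - 1), ζ ^ (((k : ZMod q) * (g : ZMod q) ^ t).val) = -1 := by
  haveI : Fact q.Prime := ⟨hq⟩
  have hq1 : 1 < q := hq.one_lt
  have hg0 : (g : ZMod q) ≠ 0 := by
    intro h0
    have := pow_orderOf_eq_one (g : ZMod q)
    rw [hg, h0, zero_pow (by omega)] at this
    exact zero_ne_one this
  have hk0 : (k : ZMod q) ≠ 0 := by
    rwa [Ne, ZMod.natCast_eq_zero_iff]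
  set e : ℕ → ZMod q := fun t => (k : ZMod q) * (g : ZMod q) ^ t with he
  have hinj : Set.InjOn e (range (q - 1)) := by
    intro i hi j hj hij
    have hpow : (g : ZMod q) ^ i = (g : ZMod q) ^ j := mul_left_cancel₀ hk0 hij
    have := aux_pow_modEq hg0 hpow
    rw [hg] at this
    have hi' := mem_range.mp hi
    have hj' := mem_range.mp hj
    rw [Nat.ModEq] at this
    rwa [Nat.mod_eq_of_lt hi', Nat.mod_eq_of_lt hj'] at this
  have hne0 : ∀ t, e t ≠ 0 := fun t => mul_ne_zero hk0 (pow_ne_zero t hg0)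
  have himg : (range (q - 1)).image e = Finset.univ.erase 0 := by
    apply Finset.eq_of_subset_of_card_le
    · intro c hc
      obtain ⟨t, _, rfl⟩ := mem_image.mp hc
      exact Finset.mem_erase.mpr ⟨hne0 t, Finset.mem_univ _⟩
    · rw [Finset.card_erase_of_mem (Finset.mem_univ _), Finset.card_univ, ZMod.card,
        Finset.card_image_of_injOn hinj, card_range]
  have hsum1 : ∑ t ∈ range (q - 1), ζ ^ (e t).val
      = ∑ c ∈ Finset.univ.erase (0 : ZMod q), ζ ^ c.val := by
    rw [← himg, Finset.sum_image hinj]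
  have hsum2 : ∑ c : ZMod q, ζ ^ c.val = 0 := by
    haveI : NeZero q := ⟨by omega⟩
    rw [aux_sum_zmod q (fun c => ζ ^ c.val)]
    have : ∀ i ∈ range q, ζ ^ ((i : ZMod q)).val = ζ ^ i := by
      intro i hi
      rw [ZMod.val_natCast_of_lt (mem_range.mp hi)]
    rw [Finset.sum_congr rfl this, geom_sum_eq hζ1, hζq, sub_self, zero_div]
  have hsum3 : ∑ c ∈ Finset.univ.erase (0 : ZMod q), ζ ^ c.val
      + ζ ^ (0 : ZMod q).val = 0 := by
    rw [Finset.sum_erase_add _ _ (Finset.mem_univ _)]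
    exact hsum2
  rw [ZMod.val_zero, pow_zero] at hsum3
  rw [hsum1]
  linear_combination hsum3
set_option maxHeartbeats 2000000 in
theorem stmt_15
    (p q : ℕ) (hp : p.Prime) (hq : q.Prime) (hop : Odd p) (hoq : Odd q)
    (hne : p ≠ q) (d : ℕ) (hd : d = Nat.gcd (p - 1) (q - 1))
    (g : ℕ) (hgp : orderOf (g : ZMod p) = p - 1) (hgq : orderOf (g : ZMod q) = q - 1)
    (x : ℕ) (hxp : (x : ZMod p) = (g : ZMod p)) (hxq : (x : ZMod q) = 1)
    (L : ℕ) (hL : L = (p - 1) * (q - 1) / d)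
    (D : ℕ → Finset (ZMod (p * q)))
    (hD : D = fun i => (Finset.range L).image
      (fun t => (g : ZMod (p * q)) ^ t * (x : ZMod (p * q)) ^ i))
    (Dstar : ℕ → Finset (ZMod (p * q)))
    (hDstar : Dstar = fun j => (Finset.range (d / 2)).biUnion (fun i => D (2 * i + j)))
    (P : Finset (ZMod (p * q)))
    (hP : P = (Finset.Icc 1 (q - 1)).image (fun k => ((k * p : ℕ) : ZMod (p * q))))
    (s : ℕ → ℕ)
    (hs : s = fun i : ℕ => if ((i : ℕ) : ZMod (p * q)) ∈ Dstar 1 ∪ P then 1 else 0)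
    (hlt : p < q)
    (Q : Finset (ZMod (p * q)))
    (hQ : Q = (Finset.Icc 1 (p - 1)).image (fun k => ((k * q : ℕ) : ZMod (p * q))))
    (ω : ℂ) (hω : IsPrimitiveRoot ω (p * q))
    (S : ℂ → ℂ) (hS : S = fun z => ∑ i ∈ Finset.range (p * q), (s i : ℂ) * z ^ i) :
    (∀ a ∈ P, S (ω ^ a.val) = -((p : ℂ) + 1) / 2) ∧
      (∀ a ∈ Q, S (ω ^ a.val) = ((q : ℂ) - 1) / 2) := by
  haveI : Fact p.Prime := ⟨hp⟩
  haveI : Fact q.Prime := ⟨hq⟩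
  have hp2 : 2 ≤ p := hp.two_le
  have hq2 : 2 ≤ q := hq.two_le
  obtain ⟨p', hp'⟩ := hop
  obtain ⟨q', hq'⟩ := hoq
  have hp3 : 3 ≤ p := by rcases Nat.lt_or_ge p 3 with h | h; · interval_cases p <;> omega
                         · exact h
  have hq3 : 3 ≤ q := by omega
  have hNpos : 0 < p * q := by positivity
  haveI : NeZero (p * q) := ⟨by omega⟩
  have hωN : ω ^ (p * q) = 1 := hω.pow_eq_one
  have hcong : ∀ {m n : ℕ}, m ≡ n [MOD p * q] → ω ^ m = ω ^ n :=
    fun h => aux_pow_congr ω (p * q) hωN h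
  have hdp : d ∣ p - 1 := hd ▸ Nat.gcd_dvd_left _ _
  have hdq : d ∣ q - 1 := hd ▸ Nat.gcd_dvd_right _ _
  have hd2 : 2 ∣ d := hd ▸ Nat.dvd_gcd ⟨p', by omega⟩ ⟨q', by omega⟩
  have hdpos : 0 < d := by
    rw [hd]; exact Nat.gcd_pos_of_pos_left _ (by omega)
  obtain ⟨e, hde⟩ := hd2
  obtain ⟨mP, hmP⟩ := hdp
  obtain ⟨mQ, hmQ⟩ := hdq
  have hd2' : d / 2 = e := by omega
  have hLP : L = mP * (q - 1) := by
    rw [hL, hmP, mul_assoc, Nat.mul_div_cancel_left _ hdpos]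
  have hLQ : L = mQ * (p - 1) := by
    rw [hL, hmQ]
    rw [show (p-1) * (d * mQ) = d * (mQ * (p-1)) by ring, Nat.mul_div_cancel_left _ hdpos]
  have hgp0 : (g : ZMod p) ≠ 0 := by
    intro h0
    have h1 := pow_orderOf_eq_one (g : ZMod p)
    rw [hgp, h0, zero_pow (by omega)] at h1
    exact zero_ne_one h1
  have hgq0 : (g : ZMod q) ≠ 0 := by
    intro h0
    have h1 := pow_orderOf_eq_one (g : ZMod q)
    rw [hgq, h0, zero_pow (by omega)] at h1
    exact zero_ne_one h1
  have hxq1 : x ≡ 1 [MOD q] := by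
    have := (ZMod.natCast_eq_natCast_iff x 1 q).mp (by rw [Nat.cast_one]; exact hxq)
    exact this
  have hxpg : x ≡ g [MOD p] := (ZMod.natCast_eq_natCast_iff x g p).mp hxp
  have hgq1 : g ^ (q - 1) ≡ 1 [MOD q] := by
    apply (ZMod.natCast_eq_natCast_iff _ _ _).mp
    push_cast
    rw [← hgq, pow_orderOf_eq_one]
  have hgp1 : g ^ (p - 1) ≡ 1 [MOD p] := by
    apply (ZMod.natCast_eq_natCast_iff _ _ _).mp
    push_cast
    rw [← hgp, pow_orderOf_eq_one]
  -- extraction of congruences from equalities in ZMod (p*q)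
  have hext : ∀ t s mi mj : ℕ,
      (g : ZMod (p*q)) ^ t * (x : ZMod (p*q)) ^ mi
        = (g : ZMod (p*q)) ^ s * (x : ZMod (p*q)) ^ mj →
      (t + mi ≡ s + mj [MOD p - 1] ∧ t ≡ s [MOD q - 1]) := by
    intro t s mi mj h
    constructor
    · have h1 := congrArg (ZMod.castHom (dvd_mul_right p q) (ZMod p)) h
      simp only [map_mul, map_pow, map_natCast, hxp] at h1
      rw [← pow_add, ← pow_add] at h1
      have h2 := aux_pow_modEq hgp0 h1
      rwa [hgp] at h2
    · have h1 := congrArg (ZMod.castHom (dvd_mul_left q p) (ZMod q)) h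
      simp only [map_mul, map_pow, map_natCast, hxq, one_pow, mul_one] at h1
      have h2 := aux_pow_modEq hgq0 h1
      rwa [hgq] at h2
  -- lcm fact
  have hlcm : Nat.lcm (p - 1) (q - 1) = L := by
    have h1 : d * Nat.lcm (p - 1) (q - 1) = (p - 1) * (q - 1) := by
      rw [hd]; exact Nat.gcd_mul_lcm _ _
    rw [hL, ← h1, Nat.mul_div_cancel_left _ hdpos]
  -- injectivity of t ↦ g^t x^m on range L
  have hDinj : ∀ m : ℕ, Set.InjOn
      (fun t => (g : ZMod (p*q)) ^ t * (x : ZMod (p*q)) ^ m) (Finset.range L) := by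
    intro m t ht s hs' h
    obtain ⟨h1, h2⟩ := hext t s m m h
    have h1' : t ≡ s [MOD p - 1] := h1.add_right_cancel' m
    have hz1 : ((p - 1 : ℕ) : ℤ) ∣ (s : ℤ) - t := h1'.dvd
    have hz2 : ((q - 1 : ℕ) : ℤ) ∣ (s : ℤ) - t := h2.dvd
    have hzl : ((Nat.lcm (p-1) (q-1) : ℕ) : ℤ) ∣ (s : ℤ) - t := by
      rw [← Int.lcm_natCast_natCast]; exact Int.coe_lcm_dvd hz1 hz2
    have hts : t ≡ s [MOD L] := by
      rw [← hlcm]; exact (Nat.modEq_iff_dvd).mpr hzl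
    have ht' := Finset.mem_range.mp ht
    have hs'' := Finset.mem_range.mp hs'
    rw [Nat.ModEq, Nat.mod_eq_of_lt ht', Nat.mod_eq_of_lt hs''] at hts
    exact hts
  -- pairwise disjointness of the classes in Dstar 1
  have hpair : (↑(Finset.range (d / 2)) : Set ℕ).PairwiseDisjoint
      (fun i => D (2 * i + 1)) := by
    intro i hi j hj hij
    simp only [Finset.coe_range, Set.mem_Iio] at hi hj
    simp only [Function.onFun]
    rw [Finset.disjoint_left]
    intro c hci hcj
    rw [hD] at hci hcj
    obtain ⟨t, ht, hct⟩ := Finset.mem_image.mp hci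
    obtain ⟨u, hu, hcu⟩ := Finset.mem_image.mp hcj
    rw [← hcu] at hct
    obtain ⟨h1, h2⟩ := hext t u (2*i+1) (2*j+1) hct
    have hz1 : ((p - 1 : ℕ) : ℤ) ∣ ((u : ℤ) + (2*j+1)) - ((t : ℤ) + (2*i+1)) := by
      have := h1.dvd
      push_cast at this ⊢
      convert this using 1
    have hz2 : ((q - 1 : ℕ) : ℤ) ∣ (u : ℤ) - t := h2.dvd
    have hdz1 : (d : ℤ) ∣ ((u : ℤ) + (2*j+1)) - ((t : ℤ) + (2*i+1)) :=
      dvd_trans (Int.natCast_dvd_natCast.mpr ⟨mP, hmP⟩) hz1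
    have hdz2 : (d : ℤ) ∣ (u : ℤ) - t :=
      dvd_trans (Int.natCast_dvd_natCast.mpr ⟨mQ, hmQ⟩) hz2
    have hdz3 : (d : ℤ) ∣ 2*(j : ℤ) - 2*(i : ℤ) := by
      have := Int.dvd_sub hdz1 hdz2
      convert this using 1
      ring
    have hzero : 2*(j : ℤ) - 2*(i : ℤ) = 0 := by
      refine Int.eq_zero_of_dvd_of_natAbs_lt_natAbs hdz3 ?_
      rw [hd2'] at hi hj
      omega
    exact hij (by omega)
  -- disjointness of Dstar 1 and P
  have hdisjDP : Disjoint (Dstar 1) P := by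
    rw [Finset.disjoint_left]
    intro c hc1 hc2
    rw [hDstar] at hc1
    obtain ⟨i, _, hci⟩ := Finset.mem_biUnion.mp hc1
    rw [hD] at hci
    obtain ⟨t, _, hct⟩ := Finset.mem_image.mp hci
    rw [hP] at hc2
    obtain ⟨j, _, hcj⟩ := Finset.mem_image.mp hc2
    rw [← hcj] at hct
    have h1 := congrArg (ZMod.castHom (dvd_mul_right p q) (ZMod p)) hct
    simp only [map_mul, map_pow, map_natCast, hxp] at h1
    rw [← pow_add] at h1
    have h2 : ((j * p : ℕ) : ZMod p) = 0 := by
      push_cast [ZMod.natCast_self]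
      ring
    rw [h2] at h1
    exact pow_ne_zero _ hgp0 h1
  -- congruence helper for casts
  have hvc : ∀ A C : ℕ, ω ^ (A * ((C : ZMod (p*q)).val)) = ω ^ (A * C) := by
    intro A C
    apply hcong
    apply Nat.ModEq.mul_left
    rw [ZMod.val_natCast]
    exact Nat.mod_modEq C (p*q)
  -- injectivity of the parametrization of P
  have hPinj : Set.InjOn (fun k => ((k * p : ℕ) : ZMod (p*q))) (Finset.Icc 1 (q-1)) := by
    intro j hj j' hj' h
    obtain ⟨hj1, hj2⟩ := Finset.mem_Icc.mp hj
    obtain ⟨hj1', hj2'⟩ := Finset.mem_Icc.mp hj'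
    have h1 : j * p ≡ j' * p [MOD p * q] := (ZMod.natCast_eq_natCast_iff _ _ _).mp h
    have hb : j * p < p * q := by
      rw [mul_comm p q]
      exact mul_lt_mul_of_pos_right (show j < q by omega) (by omega)
    have hb' : j' * p < p * q := by
      rw [mul_comm p q]
      exact mul_lt_mul_of_pos_right (show j' < q by omega) (by omega)
    rw [Nat.ModEq, Nat.mod_eq_of_lt hb, Nat.mod_eq_of_lt hb'] at h1
    exact Nat.eq_of_mul_eq_mul_right (by omega) h1
  -- the key decomposition of S (ω ^ A)
  have key : ∀ A : ℕ, S (ω ^ A) =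
      (∑ i ∈ Finset.range (d/2), ∑ t ∈ Finset.range L,
        ω ^ (A * (g ^ t * x ^ (2*i+1))))
      + ∑ j ∈ Finset.Icc 1 (q-1), ω ^ (A * (j * p)) := by
    intro A
    rw [hS]
    simp only
    have e1 : ∀ i ∈ Finset.range (p*q), (s i : ℂ) * (ω ^ A) ^ i
        = (if ((i : ℕ) : ZMod (p*q)) ∈ Dstar 1 ∪ P then (1:ℂ) else 0)
          * ω ^ (A * ((i : ZMod (p*q)).val)) := by
      intro i _
      rw [hs]
      simp only
      congr 1
      · split <;> simp
      · rw [← pow_mul, hvc A i]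
    rw [Finset.sum_congr rfl e1, ← aux_sum_zmod (p*q)
      (fun c => (if c ∈ Dstar 1 ∪ P then (1:ℂ) else 0) * ω ^ (A * c.val))]
    have e2 : ∀ c : ZMod (p*q),
        (if c ∈ Dstar 1 ∪ P then (1:ℂ) else 0) * ω ^ (A * c.val)
        = (if c ∈ Dstar 1 ∪ P then ω ^ (A * c.val) else 0) := by
      intro c; split <;> simp
    rw [Finset.sum_congr rfl (fun c _ => e2 c)]
    rw [Finset.sum_ite_mem, Finset.univ_inter, Finset.sum_union hdisjDP]
    congr 1
    · rw [hDstar]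
      simp only
      rw [Finset.sum_biUnion hpair]
      apply Finset.sum_congr rfl
      intro i _
      rw [hD]
      simp only
      rw [Finset.sum_image (hDinj (2*i+1))]
      apply Finset.sum_congr rfl
      intro t _
      have hc : (g : ZMod (p*q)) ^ t * (x : ZMod (p*q)) ^ (2*i+1)
          = ((g ^ t * x ^ (2*i+1) : ℕ) : ZMod (p*q)) := by push_cast; ring
      rw [hc, hvc A]
    · rw [hP, Finset.sum_image hPinj]
      apply Finset.sum_congr rfl
      intro j _
      rw [hvc A]
  constructor
  · -- case a ∈ P
    intro a ha
    rw [hP] at ha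
    obtain ⟨k, hk, hak⟩ := Finset.mem_image.mp ha
    obtain ⟨hk1, hk2⟩ := Finset.mem_Icc.mp hk
    have hA : a.val ≡ k * p [MOD p * q] := by
      apply (ZMod.natCast_eq_natCast_iff _ _ _).mp
      rw [ZMod.natCast_rightInverse a, ← hak]
    rw [key a.val]
    have hq_ndvd_k : ¬ q ∣ k := by
      intro h'
      have := Nat.le_of_dvd (by omega) h'
      omega
    -- the P-part sum
    have hPsum : ∑ j ∈ Finset.Icc 1 (q-1), ω ^ (a.val * (j * p)) = -1 := by
      have hterm : ∀ j : ℕ, ω ^ (a.val * (j * p)) = (ω ^ (k*p*p)) ^ j := by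
        intro j
        have h1 : a.val * (j*p) ≡ (k*p) * (j*p) [MOD p*q] := hA.mul_right _
        have h2 : (k*p) * (j*p) = (k*p*p) * j := by ring
        rw [hcong h1, h2, pow_mul]
      have hζq : (ω ^ (k*p*p)) ^ q = 1 := by
        rw [← pow_mul, show k*p*p*q = (p*q)*(k*p) by ring, pow_mul, hωN, one_pow]
      have hζ1 : ω ^ (k*p*p) ≠ 1 := by
        intro h
        have hdvd := (hω.pow_eq_one_iff_dvd _).mp h
        obtain ⟨c, hc⟩ := hdvd
        have h5 : p * (k*p) = p * (q*c) := by
          calc p * (k*p) = k*p*p := by ring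
          _ = p*q*c := hc
          _ = p * (q*c) := by ring
        have hqkp : q ∣ k * p := ⟨c, Nat.eq_of_mul_eq_mul_left (by omega) h5⟩
        rcases (Nat.Prime.dvd_mul hq).mp hqkp with h' | h'
        · exact hq_ndvd_k h'
        · have := Nat.le_of_dvd (by omega) h'
          omega
      have hrange : Finset.range q = insert 0 (Finset.Icc 1 (q-1)) := by
        ext j
        simp only [Finset.mem_range, Finset.mem_insert, Finset.mem_Icc]
        omega
      have hgeom : ∑ j ∈ Finset.range q, (ω ^ (k*p*p)) ^ j = 0 := by
        rw [geom_sum_eq hζ1, hζq, sub_self, zero_div]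
      rw [hrange, Finset.sum_insert (by simp)] at hgeom
      rw [Finset.sum_congr rfl (fun j _ => hterm j)]
      rw [pow_zero] at hgeom
      linear_combination hgeom
    -- the Dstar-part sum
    have hDsum : ∑ i ∈ Finset.range (d/2), ∑ t ∈ Finset.range L,
        ω ^ (a.val * (g ^ t * x ^ (2*i+1))) = -(((e * mP : ℕ) : ℂ)) := by
      have hterm : ∀ i t : ℕ, ω ^ (a.val * (g ^ t * x ^ (2*i+1)))
          = ω ^ (p * (k * g ^ t)) := by
        intro i t
        have h1 : a.val * (g^t * x^(2*i+1)) ≡ (k*p) * (g^t * x^(2*i+1)) [MOD p*q] :=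
          hA.mul_right _
        have h2 : (k*p) * (g^t * x^(2*i+1)) = p * (k * g^t * x^(2*i+1)) := by ring
        have h3 : k * g^t * x^(2*i+1) ≡ k * g^t [MOD q] := by
          have := (hxq1.pow (2*i+1)).mul_left (k * g^t)
          simpa using this
        have h4 : p * (k * g^t * x^(2*i+1)) ≡ p * (k * g^t) [MOD p*q] :=
          h3.mul_left' p
        rw [hcong h1, h2, hcong h4]
      have hper : ∀ t, ω ^ (p * (k * g ^ (t + (q-1)))) = ω ^ (p * (k * g ^ t)) := by
        intro t
        apply hcong
        apply Nat.ModEq.mul_left'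
        apply Nat.ModEq.mul_left
        calc g ^ (t + (q-1)) = g^t * g^(q-1) := pow_add g t (q-1)
        _ ≡ g^t * 1 [MOD q] := hgq1.mul_left _
        _ = g^t := mul_one _
      have hchar : ∑ t ∈ Finset.range (q-1), ω ^ (p * (k * g ^ t)) = -1 := by
        have hzq : (ω ^ p) ^ q = 1 := by rw [← pow_mul]; exact hωN
        have hz1 : (ω ^ p) ≠ 1 := by
          intro h
          have hdvd := (hω.pow_eq_one_iff_dvd _).mp h
          have := Nat.le_of_dvd (by omega) hdvd
          nlinarith
        have := aux_char_sum q hq (ω ^ p) hzq hz1 g hgq k hq_ndvd_k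
        rw [← this]
        apply Finset.sum_congr rfl
        intro t _
        have hv : ((k : ZMod q) * (g : ZMod q) ^ t) = ((k * g^t : ℕ) : ZMod q) := by
          push_cast; ring
        rw [hv, ZMod.val_natCast, ← pow_mul]
        exact hcong (((Nat.mod_modEq _ q).symm).mul_left' p)
      have hinner : ∀ i : ℕ, ∑ t ∈ Finset.range L, ω ^ (a.val * (g ^ t * x ^ (2*i+1)))
          = -(mP : ℂ) := by
        intro i
        rw [Finset.sum_congr rfl (fun t _ => hterm i t), hLP,
          aux_sum_periodic _ mP (q-1) hper, hchar]
        simp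
      rw [Finset.sum_congr rfl (fun i _ => hinner i), Finset.sum_const,
        Finset.card_range, hd2']
      push_cast
      ring
    rw [hDsum, hPsum]
    have hpc : p = 2 * (e * mP) + 1 := by
      have h6 : p - 1 = 2 * (e * mP) := by rw [hmP, hde]; ring
      omega
    rw [hpc]
    push_cast
    ring
  · -- case a ∈ Q
-- case a ∈ Q
    intro a ha
    rw [hQ] at ha
    obtain ⟨k, hk, hak⟩ := Finset.mem_image.mp ha
    obtain ⟨hk1, hk2⟩ := Finset.mem_Icc.mp hk
    have hA : a.val ≡ k * q [MOD p * q] := by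
      apply (ZMod.natCast_eq_natCast_iff _ _ _).mp
      rw [ZMod.natCast_rightInverse a, ← hak]
    rw [key a.val]
    have hp_ndvd_k : ¬ p ∣ k := by
      intro h'
      have := Nat.le_of_dvd (by omega) h'
      omega
    have hp_ndvd_g : ¬ p ∣ g := by
      intro h'
      exact hgp0 ((ZMod.natCast_eq_zero_iff g p).mpr h')
    -- the P-part sum
    have hPsum : ∑ j ∈ Finset.Icc 1 (q-1), ω ^ (a.val * (j * p)) = ((q : ℂ) - 1) := by
      have hterm : ∀ j : ℕ, ω ^ (a.val * (j * p)) = 1 := by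
        intro j
        have h1 : a.val * (j*p) ≡ (k*q) * (j*p) [MOD p*q] := hA.mul_right _
        have h2 : (k*q) * (j*p) = (p*q) * (k*j) := by ring
        rw [hcong h1, h2, pow_mul, hωN, one_pow]
      rw [Finset.sum_congr rfl (fun j _ => hterm j), Finset.sum_const, Nat.card_Icc]
      have : q - 1 + 1 - 1 = q - 1 := by omega
      rw [this]
      simp only [nsmul_eq_mul, mul_one]
      push_cast [Nat.cast_sub (by omega : 1 ≤ q)]
      ring
    -- the Dstar-part sum
    have hDsum : ∑ i ∈ Finset.range (d/2), ∑ t ∈ Finset.range L,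
        ω ^ (a.val * (g ^ t * x ^ (2*i+1))) = -(((e * mQ : ℕ) : ℂ)) := by
      have hterm : ∀ i t : ℕ, ω ^ (a.val * (g ^ t * x ^ (2*i+1)))
          = ω ^ (q * ((k * g ^ (2*i+1)) * g ^ t)) := by
        intro i t
        have h1 : a.val * (g^t * x^(2*i+1)) ≡ (k*q) * (g^t * x^(2*i+1)) [MOD p*q] :=
          hA.mul_right _
        have h2 : (k*q) * (g^t * x^(2*i+1)) = q * (k * g^t * x^(2*i+1)) := by ring
        have h3 : k * g^t * x^(2*i+1) ≡ (k * g^(2*i+1)) * g^t [MOD p] := by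
          have := (hxpg.pow (2*i+1)).mul_left (k * g^t)
          calc k * g^t * x^(2*i+1) ≡ k * g^t * g^(2*i+1) [MOD p] := this
          _ = (k * g^(2*i+1)) * g^t := by ring
        have h4 : q * (k * g^t * x^(2*i+1)) ≡ q * ((k * g^(2*i+1)) * g^t) [MOD p*q] := by
          have := h3.mul_left' q
          rwa [mul_comm q p] at this
        rw [hcong h1, h2, hcong h4]
      have hper : ∀ k' t : ℕ, ω ^ (q * (k' * g ^ (t + (p-1)))) = ω ^ (q * (k' * g ^ t)) := by
        intro k' t
        apply hcong
        have h5 : k' * g ^ (t + (p-1)) ≡ k' * g ^ t [MOD p] := by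
          apply Nat.ModEq.mul_left
          calc g ^ (t + (p-1)) = g^t * g^(p-1) := pow_add g t (p-1)
          _ ≡ g^t * 1 [MOD p] := hgp1.mul_left _
          _ = g^t := mul_one _
        have := h5.mul_left' q
        rwa [mul_comm q p] at this
      have hchar : ∀ k' : ℕ, ¬ p ∣ k' →
          ∑ t ∈ Finset.range (p-1), ω ^ (q * (k' * g ^ t)) = -1 := by
        intro k' hk'
        have hzp : (ω ^ q) ^ p = 1 := by rw [← pow_mul, mul_comm q p]; exact hωN
        have hz1 : (ω ^ q) ≠ 1 := by
          intro h
          have hdvd := (hω.pow_eq_one_iff_dvd _).mp h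
          have := Nat.le_of_dvd (by omega) hdvd
          nlinarith
        have := aux_char_sum p hp (ω ^ q) hzp hz1 g hgp k' hk'
        rw [← this]
        apply Finset.sum_congr rfl
        intro t _
        have hv : ((k' : ZMod p) * (g : ZMod p) ^ t) = ((k' * g^t : ℕ) : ZMod p) := by
          push_cast; ring
        rw [hv, ZMod.val_natCast, ← pow_mul]
        apply hcong
        have := ((Nat.mod_modEq (k' * g^t) p).symm).mul_left' q
        rwa [mul_comm q p] at this
      have hinner : ∀ i : ℕ, ∑ t ∈ Finset.range L, ω ^ (a.val * (g ^ t * x ^ (2*i+1)))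
          = -(mQ : ℂ) := by
        intro i
        have hk' : ¬ p ∣ k * g ^ (2*i+1) := by
          intro h'
          rcases (Nat.Prime.dvd_mul hp).mp h' with h'' | h''
          · exact hp_ndvd_k h''
          · exact hp_ndvd_g (hp.dvd_of_dvd_pow h'')
        rw [Finset.sum_congr rfl (fun t _ => hterm i t), hLQ,
          aux_sum_periodic _ mQ (p-1) (hper (k * g ^ (2*i+1))), hchar _ hk']
        simp
      rw [Finset.sum_congr rfl (fun i _ => hinner i), Finset.sum_const,
        Finset.card_range, hd2']
      push_cast
      ring
    rw [hDsum, hPsum]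
    have hqc : q = 2 * (e * mQ) + 1 := by
      have h6 : q - 1 = 2 * (e * mQ) := by rw [hmQ, hde]; ring
      omega
    rw [hqc]
    push_cast
    ring
end

section
/- Let {s_i} be the modified Jacobi sequence of period N = pq, ω = e^{2πi/N}. If a ∈ D_0*, then S(ω^a) = -Ω_0, and if a ∈ D_1*, then S(ω^a) = -Ω_1, where Ω_j = Σ_{x∈D_j*} ω^x. -/
open Finset

private lemma cast_eq_iff16 {p q : ℕ} (hp : p.Prime) (hq : q.Prime) (hne : p ≠ q)
    (A B : ℕ) :
    ((A : ZMod (p*q)) = (B : ZMod (p*q))) ↔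
      ((A : ZMod p) = (B : ZMod p) ∧ (A : ZMod q) = (B : ZMod q)) := by
  have cop : Nat.Coprime p q := (Nat.coprime_primes hp hq).mpr hne
  rw [ZMod.natCast_eq_natCast_iff, ZMod.natCast_eq_natCast_iff, ZMod.natCast_eq_natCast_iff,
    ← Nat.modEq_and_modEq_iff_modEq_mul cop]

private lemma gmod_ne_zero {p g : ℕ} (hp : p.Prime)
    (hgp : orderOf (g : ZMod p) = p - 1) : (g : ZMod p) ≠ 0 := by
  haveI := Fact.mk hp
  intro h
  have h2 := pow_orderOf_eq_one (g : ZMod p)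
  rw [hgp, h, zero_pow (by have := hp.two_le; omega)] at h2
  exact zero_ne_one h2

private lemma gpow_card {p g : ℕ} (hgp : orderOf (g : ZMod p) = p - 1)
    {m : ℕ} (hm : (p - 1) ∣ m) : (g : ZMod p) ^ m = 1 := by
  exact orderOf_dvd_iff_pow_eq_one.mp (hgp ▸ hm)

/-- `G^L = 1` in `ZMod (p*q)`. -/
private lemma GL_eq_one {p q d g L : ℕ} (hp : p.Prime) (hq : q.Prime) (hne : p ≠ q)
    (hd : d = Nat.gcd (p - 1) (q - 1))
    (hgp : orderOf (g : ZMod p) = p - 1) (hgq : orderOf (g : ZMod q) = q - 1)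
    (hL : L = (p - 1) * (q - 1) / d) :
    (g : ZMod (p*q)) ^ L = 1 := by
  have hdq : d ∣ (q - 1) := hd ▸ Nat.gcd_dvd_right _ _
  have hdp : d ∣ (p - 1) := hd ▸ Nat.gcd_dvd_left _ _
  have hLp : (p - 1) ∣ L := by
    rw [hL, Nat.mul_div_assoc _ hdq]; exact Dvd.intro _ rfl
  have hLq : (q - 1) ∣ L := by
    rw [hL, Nat.mul_comm, Nat.mul_div_assoc _ hdp]; exact Dvd.intro _ rfl
  have : ((g^L : ℕ) : ZMod (p*q)) = ((1 : ℕ) : ZMod (p*q)) := by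
    rw [cast_eq_iff16 hp hq hne]
    constructor <;> push_cast
    · exact gpow_card hgp hLp
    · exact gpow_card hgq hLq
  push_cast at this; exact this

private lemma pow_mod16 {M : Type*} [Monoid M] {a : M} {L : ℕ} (h : a ^ L = 1) (s : ℕ) :
    a ^ (s % L) = a ^ s := by
  conv_rhs => rw [← Nat.mod_add_div s L, pow_add, pow_mul, h, one_pow, mul_one]

section part2
variable {p q d g x L : ℕ}

private lemma pow_inj16 (hp : p.Prime) (hgp : orderOf (g : ZMod p) = p - 1)
    {s t : ℕ} (h : (g : ZMod p) ^ s = (g : ZMod p) ^ t) : s ≡ t [MOD p - 1] := by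
  haveI := Fact.mk hp
  have hu : IsUnit (g : ZMod p) := (gmod_ne_zero hp hgp).isUnit
  have h2 : hu.unit ^ s = hu.unit ^ t := by
    ext; push_cast [hu.unit_spec]; exact h
  have := pow_eq_pow_iff_modEq.mp h2
  rwa [← orderOf_units, hu.unit_spec, hgp] at this

private lemma memD16 (hL0 : 0 < L) (hGL : (g : ZMod (p*q)) ^ L = 1)
    {c : ZMod (p*q)} {m : ℕ} :
    (c ∈ (Finset.range L).image (fun t => (g : ZMod (p*q))^t * (x : ZMod (p*q))^m))
      ↔ ∃ s : ℕ, c = (g : ZMod (p*q))^s * (x : ZMod (p*q))^m := by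
  simp only [Finset.mem_image, Finset.mem_range]
  constructor
  · rintro ⟨t, _, rfl⟩; exact ⟨t, rfl⟩
  · rintro ⟨s, rfl⟩
    exact ⟨s % L, Nat.mod_lt _ hL0, by rw [pow_mod16 hGL]⟩

/-- existence of `e` with `x^d = g^e` in `ZMod (p*q)`. -/
private lemma Xd_eq_Ge (hp : p.Prime) (hq : q.Prime) (hne : p ≠ q)
    (hd : d = Nat.gcd (p - 1) (q - 1))
    (hgp : orderOf (g : ZMod p) = p - 1) (hgq : orderOf (g : ZMod q) = q - 1)
    (hxp : (x : ZMod p) = (g : ZMod p)) (hxq : (x : ZMod q) = 1) :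
    ∃ e : ℕ, (x : ZMod (p*q)) ^ d = (g : ZMod (p*q)) ^ e := by
  have hcong : d ≡ 0 [MOD Nat.gcd (p-1) (q-1)] := by
    rw [← hd]; exact (Nat.modEq_zero_iff_dvd).mpr dvd_rfl
  obtain ⟨e, he1, he2⟩ := Nat.chineseRemainder' hcong
  refine ⟨e, ?_⟩
  have : ((x^d : ℕ) : ZMod (p*q)) = ((g^e : ℕ) : ZMod (p*q)) := by
    rw [cast_eq_iff16 hp hq hne]
    constructor <;> push_cast
    · rw [hxp]
      have hord : (g : ZMod p) ^ (p-1) = 1 := hgp ▸ pow_orderOf_eq_one _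
      rw [← pow_mod16 hord e, he1, pow_mod16 hord d]
    · rw [hxq, one_pow]
      exact (gpow_card hgq ((Nat.modEq_zero_iff_dvd).mp he2)).symm
  push_cast at this; exact this

end part2
private def DD (p q g x L : ℕ) (m : ℕ) : Finset (ZMod (p*q)) :=
  (Finset.range L).image (fun t => (g : ZMod (p*q))^t * (x : ZMod (p*q))^m)

section part3
variable {p q d g x L e : ℕ}

private lemma memDD (hL0 : 0 < L) (hGL : (g : ZMod (p*q)) ^ L = 1) {c : ZMod (p*q)} {m : ℕ} :
    c ∈ DD p q g x L m ↔ ∃ s : ℕ, c = (g : ZMod (p*q))^s * (x : ZMod (p*q))^m :=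
  memD16 hL0 hGL

private lemma DD_add_d (hL0 : 0 < L) (hGL : (g : ZMod (p*q)) ^ L = 1)
    (he : (x : ZMod (p*q)) ^ d = (g : ZMod (p*q)) ^ e) (m : ℕ) :
    DD p q g x L (m + d) = DD p q g x L m := by
  ext c
  rw [memDD hL0 hGL, memDD hL0 hGL]
  constructor
  · rintro ⟨s, rfl⟩
    exact ⟨s + e, by rw [pow_add (a := (x : ZMod (p*q))), he, pow_add]; ring⟩
  · rintro ⟨s, rfl⟩
    refine ⟨s + e * (L - 1), ?_⟩
    have h1 : s + e * (L - 1) + e = s + e * L := by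
      have : e * (L - 1) + e = e * L := by
        have : L - 1 + 1 = L := Nat.succ_pred_eq_of_pos hL0
        calc e * (L - 1) + e = e * (L - 1 + 1) := by ring
          _ = e * L := by rw [this]
      omega
    have h3 : (g:ZMod (p*q))^(s + e*(L-1)) * (x:ZMod (p*q))^(m+d)
        = (g:ZMod (p*q))^(s + e*(L-1) + e) * (x:ZMod (p*q))^m := by
      rw [pow_add (a := (x : ZMod (p*q))), he,
        pow_add (a := (g : ZMod (p*q))) (m := s + e*(L-1))]
      ring
    rw [h3, h1, pow_add, mul_comm e L, pow_mul, hGL, one_pow, mul_one]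

private lemma DD_mod (hd0 : 0 < d) (hL0 : 0 < L) (hGL : (g : ZMod (p*q)) ^ L = 1)
    (he : (x : ZMod (p*q)) ^ d = (g : ZMod (p*q)) ^ e) (m : ℕ) :
    DD p q g x L m = DD p q g x L (m % d) := by
  induction m using Nat.strong_induction_on with
  | _ m ih =>
    rcases lt_or_ge m d with h | h
    · rw [Nat.mod_eq_of_lt h]
    · have h1 : m = (m - d) + d := by omega
      have h2 : (m - d) % d = m % d := by
        conv_rhs => rw [h1]
        rw [Nat.add_mod_right]
      conv_lhs => rw [h1]
      rw [DD_add_d hL0 hGL he, ih _ (by omega), h2]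

private lemma DD_congr (hd0 : 0 < d) (hL0 : 0 < L) (hGL : (g : ZMod (p*q)) ^ L = 1)
    (he : (x : ZMod (p*q)) ^ d = (g : ZMod (p*q)) ^ e) {m m' : ℕ} (h : m % d = m' % d) :
    DD p q g x L m = DD p q g x L m' := by
  rw [DD_mod hd0 hL0 hGL he m, DD_mod hd0 hL0 hGL he m', h]

private lemma mulDD (hL0 : 0 < L) (hGL : (g : ZMod (p*q)) ^ L = 1) (s r m : ℕ) :
    Finset.image (fun c => ((g : ZMod (p*q))^s * (x : ZMod (p*q))^r) * c) (DD p q g x L m)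
      = DD p q g x L (m + r) := by
  ext c
  rw [memDD hL0 hGL]
  simp only [Finset.mem_image]
  constructor
  · rintro ⟨c', hc', rfl⟩
    obtain ⟨t, rfl⟩ := (memDD hL0 hGL).mp hc'
    exact ⟨s + t, by rw [pow_add, pow_add]; ring⟩
  · rintro ⟨u, rfl⟩
    refine ⟨(g : ZMod (p*q))^(u + s * (L-1)) * (x : ZMod (p*q))^m,
      (memDD hL0 hGL).mpr ⟨_, rfl⟩, ?_⟩
    have h1 : s + (u + s * (L - 1)) = u + s * L := by
      have : s * (L - 1) + s = s * L := by
        have h2 : L - 1 + 1 = L := Nat.succ_pred_eq_of_pos hL0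
        calc s * (L - 1) + s = s * (L - 1 + 1) := by ring
          _ = s * L := by rw [h2]
      omega
    calc ((g : ZMod (p*q))^s * (x : ZMod (p*q))^r) * ((g : ZMod (p*q))^(u + s*(L-1)) * (x : ZMod (p*q))^m)
        = (g : ZMod (p*q))^(s + (u + s*(L-1))) * (x : ZMod (p*q))^(m+r) := by
          rw [pow_add (a := (g : ZMod (p*q))), pow_add (a := (x : ZMod (p*q)))]; ring
      _ = (g : ZMod (p*q))^u * (x : ZMod (p*q))^(m+r) := by
          rw [h1, pow_add, mul_comm s L, pow_mul, hGL, one_pow, mul_one]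

end part3
section part4
variable {p q d g x L e : ℕ}

private lemma shift_one (hd2 : 2 ∣ d) (hd0 : 0 < d) (hL0 : 0 < L)
    (hGL : (g : ZMod (p*q)) ^ L = 1)
    (he : (x : ZMod (p*q)) ^ d = (g : ZMod (p*q)) ^ e) (c : ℕ) :
    (Finset.range (d/2)).biUnion (fun i => DD p q g x L (2*i + c + 2))
      = (Finset.range (d/2)).biUnion (fun i => DD p q g x L (2*i + c)) := by
  obtain ⟨m, rfl⟩ := hd2
  have hm0 : 0 < m := by omega
  have hmm : 2 * m / 2 = m := by omega
  rw [hmm]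
  ext z
  simp only [Finset.mem_biUnion, Finset.mem_range]
  constructor
  · rintro ⟨i, hi, hz⟩
    rcases lt_or_ge (i+1) m with h | h
    · exact ⟨i+1, h, by rwa [show 2*(i+1) + c = 2*i + c + 2 by omega]⟩
    · refine ⟨0, hm0, ?_⟩
      have h1 : 2*i + c + 2 = c + 2*m := by omega
      rw [h1, DD_add_d hL0 hGL he] at hz
      rwa [show 2*0 + c = c by omega]
  · rintro ⟨i, hi, hz⟩
    rcases Nat.eq_zero_or_pos i with rfl | h
    · refine ⟨m - 1, by omega, ?_⟩
      rw [show 2*0 + c = c by omega] at hz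
      rw [show 2*(m-1) + c + 2 = c + 2*m by omega, DD_add_d hL0 hGL he]
      exact hz
    · exact ⟨i - 1, by omega, by rwa [show 2*(i-1) + c + 2 = 2*i + c by omega]⟩

private lemma shift_mul (hd2 : 2 ∣ d) (hd0 : 0 < d) (hL0 : 0 < L)
    (hGL : (g : ZMod (p*q)) ^ L = 1)
    (he : (x : ZMod (p*q)) ^ d = (g : ZMod (p*q)) ^ e) (c k : ℕ) :
    (Finset.range (d/2)).biUnion (fun i => DD p q g x L (2*i + (c + 2*k)))
      = (Finset.range (d/2)).biUnion (fun i => DD p q g x L (2*i + c)) := by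
  induction k with
  | zero => simp
  | succ k ih =>
    have h1 : ∀ i, 2*i + (c + 2*(k+1)) = 2*i + (c + 2*k) + 2 := by intro i; omega
    simp only [h1]
    rw [shift_one hd2 hd0 hL0 hGL he, ih]

private lemma image_mul_DSS (hd2 : 2 ∣ d) (hd0 : 0 < d) (hL0 : 0 < L)
    (hGL : (g : ZMod (p*q)) ^ L = 1)
    (he : (x : ZMod (p*q)) ^ d = (g : ZMod (p*q)) ^ e) (s r j : ℕ) :
    Finset.image (fun c => ((g : ZMod (p*q))^s * (x : ZMod (p*q))^r) * c)
        ((Finset.range (d/2)).biUnion (fun i => DD p q g x L (2*i + j)))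
      = (Finset.range (d/2)).biUnion (fun i => DD p q g x L (2*i + (j + r) % 2)) := by
  have step1 : Finset.image (fun c => ((g : ZMod (p*q))^s * (x : ZMod (p*q))^r) * c)
        ((Finset.range (d/2)).biUnion (fun i => DD p q g x L (2*i + j)))
      = (Finset.range (d/2)).biUnion (fun i => DD p q g x L (2*i + (j + r))) := by
    ext c
    simp only [Finset.mem_image, Finset.mem_biUnion, Finset.mem_range]
    constructor
    · rintro ⟨c', ⟨i, hi, hc'⟩, rfl⟩
      refine ⟨i, hi, ?_⟩
      rw [show 2*i + (j+r) = (2*i + j) + r by omega, ← mulDD hL0 hGL s r (2*i+j)]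
      exact Finset.mem_image_of_mem _ hc'
    · rintro ⟨i, hi, hc⟩
      rw [show 2*i + (j+r) = (2*i + j) + r by omega, ← mulDD hL0 hGL s r (2*i+j)] at hc
      obtain ⟨c', hc', rfl⟩ := Finset.mem_image.mp hc
      exact ⟨c', ⟨i, hi, hc'⟩, rfl⟩
  rw [step1]
  have h2 : ∀ i : ℕ, 2*i + (j+r) = 2*i + ((j+r) % 2 + 2*((j+r)/2)) := fun i => by omega
  simp only [h2]
  exact shift_mul hd2 hd0 hL0 hGL he _ _

end part4
section part5
variable {p q d g x L e : ℕ}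

private lemma coprime_of_ne_zero (hp : p.Prime) {n : ℕ} (h : (n : ZMod p) ≠ 0) :
    Nat.Coprime n p := by
  haveI := Fact.mk hp
  rw [Nat.coprime_comm]
  exact hp.coprime_iff_not_dvd.mpr (fun hdvd => h ((ZMod.natCast_eq_zero_iff n p).mpr hdvd))

private lemma unitG (hp : p.Prime) (hq : q.Prime)
    (hgp : orderOf (g : ZMod p) = p - 1) (hgq : orderOf (g : ZMod q) = q - 1) :
    IsUnit (g : ZMod (p*q)) := by
  haveI : NeZero (p*q) := ⟨Nat.mul_ne_zero hp.pos.ne' hq.pos.ne'⟩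
  rw [ZMod.isUnit_iff_coprime, Nat.coprime_mul_iff_right]
  exact ⟨coprime_of_ne_zero hp (gmod_ne_zero hp hgp),
    coprime_of_ne_zero hq (gmod_ne_zero hq hgq)⟩

private lemma unitX (hp : p.Prime) (hq : q.Prime)
    (hgp : orderOf (g : ZMod p) = p - 1)
    (hxp : (x : ZMod p) = (g : ZMod p)) (hxq : (x : ZMod q) = 1) :
    IsUnit (x : ZMod (p*q)) := by
  haveI : NeZero (p*q) := ⟨Nat.mul_ne_zero hp.pos.ne' hq.pos.ne'⟩
  haveI := Fact.mk hq
  rw [ZMod.isUnit_iff_coprime, Nat.coprime_mul_iff_right]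
  refine ⟨coprime_of_ne_zero hp (by rw [hxp]; exact gmod_ne_zero hp hgp),
    coprime_of_ne_zero hq (by rw [hxq]; exact one_ne_zero)⟩

/-- every nonzero element of `ZMod q` is a power of `g`. -/
private lemma exists_pow16 (hq : q.Prime) (hgq : orderOf (g : ZMod q) = q - 1)
    {c : ZMod q} (hc : c ≠ 0) : ∃ t : ℕ, c = (g : ZMod q) ^ t := by
  haveI := Fact.mk hq
  have hq2 := hq.two_le
  have himg : (Finset.range (q-1)).image (fun t => (g : ZMod q)^t)
      = Finset.univ.erase (0 : ZMod q) := by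
    apply Finset.eq_of_subset_of_card_le
    · intro z hz
      obtain ⟨t, _, rfl⟩ := Finset.mem_image.mp hz
      exact Finset.mem_erase.mpr ⟨pow_ne_zero _ (gmod_ne_zero hq hgq), Finset.mem_univ _⟩
    · rw [Finset.card_erase_of_mem (Finset.mem_univ _), Finset.card_univ, ZMod.card,
        Finset.card_image_of_injOn, Finset.card_range]
      intro i hi j hj hij
      simp only [Finset.coe_range, Set.mem_Iio] at hi hj
      have := pow_inj16 hq hgq hij
      rw [Nat.ModEq, Nat.mod_eq_of_lt hi, Nat.mod_eq_of_lt hj] at this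
      exact this
  have : c ∈ Finset.univ.erase (0 : ZMod q) := Finset.mem_erase.mpr ⟨hc, Finset.mem_univ _⟩
  rw [← himg] at this
  obtain ⟨t, _, rfl⟩ := Finset.mem_image.mp this
  exact ⟨t, rfl⟩

private lemma unit_decomp (hp : p.Prime) (hq : q.Prime) (hne : p ≠ q) (hoq : Odd q)
    (hgp : orderOf (g : ZMod p) = p - 1) (hgq : orderOf (g : ZMod q) = q - 1)
    (hxp : (x : ZMod p) = (g : ZMod p)) (hxq : (x : ZMod q) = 1)
    (hL0 : 0 < L) (hGL : (g : ZMod (p*q)) ^ L = 1)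
    {u : ZMod (p*q)} (hu : IsUnit u) :
    ∃ s m : ℕ, u = (g : ZMod (p*q))^s * (x : ZMod (p*q))^m := by
  haveI : NeZero (p*q) := ⟨Nat.mul_ne_zero hp.pos.ne' hq.pos.ne'⟩
  haveI := Fact.mk hp
  haveI := Fact.mk hq
  set v := u.val with hvdef
  have hv : ((v : ℕ) : ZMod (p*q)) = u := by rw [hvdef, ZMod.natCast_val, ZMod.cast_id]
  have hcop : Nat.Coprime v (p*q) := by
    rw [← ZMod.isUnit_iff_coprime]; rw [hv]; exact hu
  obtain ⟨hcp, hcq⟩ := Nat.coprime_mul_iff_right.mp hcop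
  have hvq : (v : ZMod q) ≠ 0 := fun h =>
    (hq.coprime_iff_not_dvd.mp (Nat.coprime_comm.mp hcq))
      ((ZMod.natCast_eq_zero_iff v q).mp h)
  obtain ⟨t, ht⟩ := exists_pow16 hq hgq hvq
  have hq3 : 3 ≤ q := by
    have h2 := hq.two_le
    have hne2 : q ≠ 2 := fun h => by rw [h] at hoq; exact (by decide : ¬ Odd 2) hoq
    omega
  set t' := t * (q - 2) with ht'def
  have hvp : (v : ZMod p) ≠ 0 := fun h =>
    (hp.coprime_iff_not_dvd.mp (Nat.coprime_comm.mp hcp))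
      ((ZMod.natCast_eq_zero_iff v p).mp h)
  have hprod : ((v : ZMod p) * (g : ZMod p)^t' : ZMod p) ≠ 0 :=
    mul_ne_zero hvp (pow_ne_zero _ (gmod_ne_zero hp hgp))
  obtain ⟨m, hm⟩ := exists_pow16 hp hgp hprod
  have key : ((v * g^t' : ℕ) : ZMod (p*q)) = ((x^m : ℕ) : ZMod (p*q)) := by
    rw [cast_eq_iff16 hp hq hne]
    constructor <;> push_cast
    · rw [hxp]; exact hm
    · have harith : t + t * (q - 2) = t * (q - 1) := by
        have h21 : q - 2 + 1 = q - 1 := by omega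
        calc t + t * (q-2) = t * (q - 2 + 1) := by ring
          _ = t * (q-1) := by rw [h21]
      rw [hxq, one_pow, ht, ← pow_add, ht'def, harith]
      exact gpow_card hgq ⟨t, by ring⟩
  push_cast at key
  rw [hv] at key
  refine ⟨t' * (L - 1), m, ?_⟩
  have h1 : t' + t' * (L - 1) = t' * L := by
    have hL1 : L - 1 + 1 = L := Nat.succ_pred_eq_of_pos hL0
    calc t' + t' * (L-1) = t' * (L - 1 + 1) := by ring
      _ = t' * L := by rw [hL1]
  calc u = u * ((g : ZMod (p*q))^t' * (g : ZMod (p*q))^(t' * (L-1))) := by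
        rw [← pow_add, h1, mul_comm t' L, pow_mul, hGL, one_pow, mul_one]
    _ = (u * (g : ZMod (p*q))^t') * (g : ZMod (p*q))^(t' * (L-1)) := by ring
    _ = (x : ZMod (p*q))^m * (g : ZMod (p*q))^(t' * (L-1)) := by rw [key]
    _ = (g : ZMod (p*q))^(t' * (L-1)) * (x : ZMod (p*q))^m := by ring

end part5
section part6
variable {p q d g x L e : ℕ}

private lemma mem_DD_isUnit (hp : p.Prime) (hq : q.Prime)
    (hgp : orderOf (g : ZMod p) = p - 1) (hgq : orderOf (g : ZMod q) = q - 1)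
    (hxp : (x : ZMod p) = (g : ZMod p)) (hxq : (x : ZMod q) = 1)
    (hL0 : 0 < L) (hGL : (g : ZMod (p*q)) ^ L = 1)
    {c : ZMod (p*q)} {m : ℕ} (hc : c ∈ DD p q g x L m) : IsUnit c := by
  obtain ⟨s, rfl⟩ := (memDD hL0 hGL).mp hc
  exact ((unitG hp hq hgp hgq).pow s).mul ((unitX hp hq hgp hxp hxq).pow m)

private lemma unit_mem_DSS (hp : p.Prime) (hq : q.Prime) (hne : p ≠ q) (hoq : Odd q)
    (hgp : orderOf (g : ZMod p) = p - 1) (hgq : orderOf (g : ZMod q) = q - 1)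
    (hxp : (x : ZMod p) = (g : ZMod p)) (hxq : (x : ZMod q) = 1)
    (hd0 : 0 < d) (hd2 : 2 ∣ d) (hL0 : 0 < L) (hGL : (g : ZMod (p*q)) ^ L = 1)
    (he : (x : ZMod (p*q)) ^ d = (g : ZMod (p*q)) ^ e)
    {u : ZMod (p*q)} (hu : IsUnit u) :
    u ∈ ((Finset.range (d/2)).biUnion (fun i => DD p q g x L (2*i + 0)))
      ∪ ((Finset.range (d/2)).biUnion (fun i => DD p q g x L (2*i + 1))) := by
  obtain ⟨s, m, rfl⟩ := unit_decomp hp hq hne hoq hgp hgq hxp hxq hL0 hGL hu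
  have hmem : (g : ZMod (p*q))^s * (x : ZMod (p*q))^m ∈ DD p q g x L (m % d) := by
    rw [← DD_mod hd0 hL0 hGL he]
    exact (memDD hL0 hGL).mpr ⟨s, rfl⟩
  have hlt : m % d < d := Nat.mod_lt _ hd0
  set i := (m % d) / 2 with hidef
  have hi : i < d / 2 := by omega
  rcases Nat.even_or_odd (m % d) with hpar | hpar
  · apply Finset.mem_union_left
    apply Finset.mem_biUnion.mpr ⟨i, Finset.mem_range.mpr hi, ?_⟩
    rwa [show 2*i + 0 = m % d by obtain ⟨k, hk⟩ := hpar; omega]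
  · apply Finset.mem_union_right
    apply Finset.mem_biUnion.mpr ⟨i, Finset.mem_range.mpr hi, ?_⟩
    rwa [show 2*i + 1 = m % d by obtain ⟨k, hk⟩ := hpar; omega]

private lemma DSS_disjoint (hp : p.Prime) (hq : q.Prime) (hne : p ≠ q)
    (hop : Odd p) (hoq : Odd q) (hd : d = Nat.gcd (p - 1) (q - 1))
    (hgp : orderOf (g : ZMod p) = p - 1) (hgq : orderOf (g : ZMod q) = q - 1)
    (hxp : (x : ZMod p) = (g : ZMod p)) (hxq : (x : ZMod q) = 1)
    (hL0 : 0 < L) (hGL : (g : ZMod (p*q)) ^ L = 1) :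
    Disjoint ((Finset.range (d/2)).biUnion (fun i => DD p q g x L (2*i + 0)))
      ((Finset.range (d/2)).biUnion (fun i => DD p q g x L (2*i + 1))) := by
  have hp3 : 2 ∣ p - 1 := by
    have h2 := hp.two_le
    obtain ⟨k, hk⟩ := hop; omega
  have hq3 : 2 ∣ q - 1 := by
    have h2 := hq.two_le
    obtain ⟨k, hk⟩ := hoq; omega
  rw [Finset.disjoint_left]
  rintro c hc0 hc1
  obtain ⟨i, _, hci⟩ := Finset.mem_biUnion.mp hc0
  obtain ⟨i', _, hci'⟩ := Finset.mem_biUnion.mp hc1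
  obtain ⟨s, rfl⟩ := (memDD hL0 hGL).mp hci
  obtain ⟨t, hct⟩ := (memDD hL0 hGL).mp hci'
  have hnat : ((g^s * x^(2*i+0) : ℕ) : ZMod (p*q)) = ((g^t * x^(2*i'+1) : ℕ) : ZMod (p*q)) := by
    push_cast; exact hct
  rw [cast_eq_iff16 hp hq hne] at hnat
  obtain ⟨hmp, hmq⟩ := hnat
  push_cast at hmp hmq
  rw [hxq, one_pow, one_pow, mul_one, mul_one] at hmq
  have h1 : s ≡ t [MOD q - 1] := pow_inj16 hq hgq hmq
  rw [hxp, ← pow_add, ← pow_add] at hmp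
  have h2 : s + (2*i+0) ≡ t + (2*i'+1) [MOD p - 1] := pow_inj16 hp hgp hmp
  have h1' : s ≡ t [MOD 2] := h1.of_dvd hq3
  have h2' : s + (2*i+0) ≡ t + (2*i'+1) [MOD 2] := h2.of_dvd hp3
  rw [Nat.ModEq] at h1' h2'
  omega
end part6
private lemma sum_range_univ16 (N : ℕ) [NeZero N] (F : ZMod N → ℂ) :
    ∑ i ∈ Finset.range N, F (i : ZMod N) = ∑ c : ZMod N, F c := by
  apply Finset.sum_nbij' (i := fun n : ℕ => (n : ZMod N)) (j := fun c : ZMod N => c.val)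
  · intro a _; exact Finset.mem_univ _
  · intro c _; exact Finset.mem_range.mpr (ZMod.val_lt c)
  · intro a ha; exact ZMod.val_natCast_of_lt (Finset.mem_range.mp ha)
  · intro c _; rw [ZMod.natCast_val, ZMod.cast_id]
  · intro a _; rfl

section part7
variable {p q : ℕ}

private def AP (p q : ℕ) : Finset (ZMod (p*q)) :=
  (Finset.range q).image (fun j => ((j * p : ℕ) : ZMod (p*q)))

private def AQ (p q : ℕ) : Finset (ZMod (p*q)) :=
  (Finset.range p).image (fun j => ((j * q : ℕ) : ZMod (p*q)))

private lemma mem_AP (hp : 0 < p) (hq : 0 < q) {c : ZMod (p*q)} :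
    c ∈ AP p q ↔ p ∣ c.val := by
  haveI : NeZero (p*q) := ⟨Nat.mul_ne_zero hp.ne' hq.ne'⟩
  constructor
  · rintro hc
    obtain ⟨j, hj, rfl⟩ := Finset.mem_image.mp hc
    rw [ZMod.val_natCast_of_lt (by
      have := Finset.mem_range.mp hj
      calc j * p < q * p := by exact (Nat.mul_lt_mul_right hp).mpr this
        _ = p * q := Nat.mul_comm _ _)]
    exact dvd_mul_left p j
  · intro hdvd
    obtain ⟨j, hj⟩ := hdvd
    refine Finset.mem_image.mpr ⟨j, Finset.mem_range.mpr ?_, ?_⟩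
    · have := ZMod.val_lt c
      rw [hj] at this
      by_contra h
      push_neg at h
      have h3 : p * q ≤ p * j := Nat.mul_le_mul_left p h
      omega
    · rw [mul_comm j p, ← hj, ZMod.natCast_val, ZMod.cast_id]

private lemma mem_AQ (hp : 0 < p) (hq : 0 < q) {c : ZMod (p*q)} :
    c ∈ AQ p q ↔ q ∣ c.val := by
  haveI : NeZero (p*q) := ⟨Nat.mul_ne_zero hp.ne' hq.ne'⟩
  constructor
  · rintro hc
    obtain ⟨j, hj, rfl⟩ := Finset.mem_image.mp hc
    rw [ZMod.val_natCast_of_lt (by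
      have := Finset.mem_range.mp hj
      calc j * q < p * q := by exact (Nat.mul_lt_mul_right hq).mpr this)]
    exact dvd_mul_left q j
  · intro hdvd
    obtain ⟨j, hj⟩ := hdvd
    refine Finset.mem_image.mpr ⟨j, Finset.mem_range.mpr ?_, ?_⟩
    · have := ZMod.val_lt c
      rw [hj] at this
      by_contra h
      push_neg at h
      have h3 : q * p ≤ q * j := Nat.mul_le_mul_left q h
      rw [mul_comm q p] at h3
      omega
    · rw [mul_comm j q, ← hj, ZMod.natCast_val, ZMod.cast_id]

private lemma sum_AP {ω : ℂ} (hp : 0 < p) (hq1 : 1 < q)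
    (hω : IsPrimitiveRoot ω (p*q)) :
    ∑ c ∈ AP p q, ω ^ c.val = 0 := by
  haveI : NeZero (p*q) := ⟨Nat.mul_ne_zero hp.ne' (by omega)⟩
  have hprim : IsPrimitiveRoot (ω ^ p) q := hω.pow (by positivity) rfl
  rw [AP, Finset.sum_image (by
    intro a ha b hb hab
    have h1 := congrArg ZMod.val hab
    rw [ZMod.val_natCast_of_lt, ZMod.val_natCast_of_lt] at h1
    · exact Nat.eq_of_mul_eq_mul_right hp h1
    · have := Finset.mem_range.mp hb
      calc b * p < q * p := (Nat.mul_lt_mul_right hp).mpr this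
        _ = p * q := Nat.mul_comm _ _
    · have := Finset.mem_range.mp ha
      calc a * p < q * p := (Nat.mul_lt_mul_right hp).mpr this
        _ = p * q := Nat.mul_comm _ _)]
  calc ∑ j ∈ Finset.range q, ω ^ (((j * p : ℕ) : ZMod (p*q)).val)
      = ∑ j ∈ Finset.range q, (ω ^ p) ^ j := by
        apply Finset.sum_congr rfl
        intro j hj
        rw [ZMod.val_natCast_of_lt (by
          have := Finset.mem_range.mp hj
          calc j * p < q * p := (Nat.mul_lt_mul_right hp).mpr this
            _ = p * q := Nat.mul_comm _ _), ← pow_mul, mul_comm j p]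
    _ = 0 := hprim.geom_sum_eq_zero hq1

private lemma sum_AQ {ω : ℂ} (hp1 : 1 < p) (hq : 0 < q)
    (hω : IsPrimitiveRoot ω (p*q)) :
    ∑ c ∈ AQ p q, ω ^ c.val = 0 := by
  haveI : NeZero (p*q) := ⟨Nat.mul_ne_zero (by omega) hq.ne'⟩
  have hprim : IsPrimitiveRoot (ω ^ q) p := hω.pow (by positivity) (mul_comm p q)
  rw [AQ, Finset.sum_image (by
    intro a ha b hb hab
    have h1 := congrArg ZMod.val hab
    rw [ZMod.val_natCast_of_lt, ZMod.val_natCast_of_lt] at h1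
    · exact Nat.eq_of_mul_eq_mul_right hq h1
    · exact (Nat.mul_lt_mul_right hq).mpr (Finset.mem_range.mp hb)
    · exact (Nat.mul_lt_mul_right hq).mpr (Finset.mem_range.mp ha))]
  calc ∑ j ∈ Finset.range p, ω ^ (((j * q : ℕ) : ZMod (p*q)).val)
      = ∑ j ∈ Finset.range p, (ω ^ q) ^ j := by
        apply Finset.sum_congr rfl
        intro j hj
        rw [ZMod.val_natCast_of_lt ((Nat.mul_lt_mul_right hq).mpr (Finset.mem_range.mp hj)),
          ← pow_mul, mul_comm j q]
    _ = 0 := hprim.geom_sum_eq_zero hp1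

end part7
section part8
variable {p q : ℕ}

private lemma AP_inter_AQ (hp : p.Prime) (hq : q.Prime) (hne : p ≠ q) :
    AP p q ∩ AQ p q = {(0 : ZMod (p*q))} := by
  haveI : NeZero (p*q) := ⟨Nat.mul_ne_zero hp.pos.ne' hq.pos.ne'⟩
  have cop : Nat.Coprime p q := (Nat.coprime_primes hp hq).mpr hne
  ext c
  simp only [Finset.mem_inter, Finset.mem_singleton, mem_AP hp.pos hq.pos,
    mem_AQ hp.pos hq.pos]
  constructor
  · rintro ⟨h1, h2⟩
    have h3 : p * q ∣ c.val := Nat.Coprime.mul_dvd_of_dvd_of_dvd cop h1 h2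
    have h5 : c.val = 0 := Nat.eq_zero_of_dvd_of_lt h3 (ZMod.val_lt c)
    calc c = ((c.val : ℕ) : ZMod (p*q)) := by rw [ZMod.natCast_val, ZMod.cast_id]
      _ = 0 := by rw [h5]; exact Nat.cast_zero
  · rintro rfl
    rw [ZMod.val_zero]
    exact ⟨dvd_zero _, dvd_zero _⟩

private lemma sum_units_eq_one {ω : ℂ} (hp : p.Prime) (hq : q.Prime) (hne : p ≠ q)
    (hω : IsPrimitiveRoot ω (p*q)) {S : Finset (ZMod (p*q))}
    (hS : ∀ c, c ∈ S ↔ IsUnit c) :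
    ∑ c ∈ S, ω ^ c.val = 1 := by
  haveI : NeZero (p*q) := ⟨Nat.mul_ne_zero hp.pos.ne' hq.pos.ne'⟩
  classical
  have hpq1 : 1 < p * q := by
    have := hp.two_le; have := hq.two_le; nlinarith
  have hSeq : S = Finset.univ.filter (fun c : ZMod (p*q) => IsUnit c) := by
    ext c; simp [hS c]
  have hnonunit : Finset.univ.filter (fun c : ZMod (p*q) => ¬ IsUnit c)
      = AP p q ∪ AQ p q := by
    ext c
    simp only [Finset.mem_filter, Finset.mem_univ, true_and, Finset.mem_union,
      mem_AP hp.pos hq.pos, mem_AQ hp.pos hq.pos]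
    have hiff : IsUnit c ↔ Nat.Coprime c.val (p*q) := by
      conv_lhs => rw [show c = ((c.val : ℕ) : ZMod (p*q)) by rw [ZMod.natCast_val, ZMod.cast_id]]
      exact ZMod.isUnit_iff_coprime _ _
    have e1 : c.val.Coprime p ↔ ¬ p ∣ c.val := by
      rw [Nat.coprime_comm]; exact hp.coprime_iff_not_dvd
    have e2 : c.val.Coprime q ↔ ¬ q ∣ c.val := by
      rw [Nat.coprime_comm]; exact hq.coprime_iff_not_dvd
    rw [hiff, Nat.coprime_mul_iff_right, e1, e2]
    tauto
  have htot : ∑ c : ZMod (p*q), ω ^ c.val = 0 := by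
    rw [← sum_range_univ16 (p*q) (fun c => ω ^ c.val)]
    calc ∑ i ∈ Finset.range (p*q), ω ^ ((i : ZMod (p*q)).val)
        = ∑ i ∈ Finset.range (p*q), ω ^ i := by
          apply Finset.sum_congr rfl
          intro i hi
          rw [ZMod.val_natCast_of_lt (Finset.mem_range.mp hi)]
      _ = 0 := hω.geom_sum_eq_zero hpq1
  have hsplit := Finset.sum_filter_add_sum_filter_not Finset.univ
    (fun c : ZMod (p*q) => IsUnit c) (fun c => ω ^ c.val)
  rw [htot, hnonunit] at hsplit
  have hui := Finset.sum_union_inter (s₁ := AP p q) (s₂ := AQ p q)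
    (f := fun c : ZMod (p*q) => ω ^ c.val)
  rw [AP_inter_AQ hp hq hne, sum_AP hp.pos hq.one_lt hω, sum_AQ hp.one_lt hq.pos hω,
    Finset.sum_singleton, ZMod.val_zero, pow_zero] at hui
  rw [hSeq]
  linear_combination hsplit - hui

end part8
section part9
variable {p q : ℕ}

private lemma AP_not_unit (hp : p.Prime) (hq : q.Prime) {c : ZMod (p*q)}
    (hc : c ∈ AP p q) (hu : IsUnit c) : False := by
  haveI : NeZero (p*q) := ⟨Nat.mul_ne_zero hp.pos.ne' hq.pos.ne'⟩
  have hdvd : p ∣ c.val := (mem_AP hp.pos hq.pos).mp hc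
  have hcop : Nat.Coprime c.val (p*q) := by
    rw [← ZMod.isUnit_iff_coprime]
    rw [show ((c.val : ℕ) : ZMod (p*q)) = c by rw [ZMod.natCast_val, ZMod.cast_id]]
    exact hu
  have h1 : Nat.Coprime c.val p := hcop.coprime_dvd_right (dvd_mul_right p q)
  have h2 : p ∣ Nat.gcd c.val p := Nat.dvd_gcd hdvd dvd_rfl
  rw [h1] at h2
  have := Nat.le_of_dvd one_pos h2
  have := hp.two_le
  omega

private lemma image_mul_AP (hp : p.Prime) (hq : q.Prime) {u : ZMod (p*q)} (hu : IsUnit u) :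
    Finset.image (fun c => u * c) (AP p q) = AP p q := by
  haveI : NeZero (p*q) := ⟨Nat.mul_ne_zero hp.pos.ne' hq.pos.ne'⟩
  apply Finset.eq_of_subset_of_card_le
  · intro c hc
    rw [Finset.mem_image] at hc
    obtain ⟨c', hc', rfl⟩ := hc
    rw [mem_AP hp.pos hq.pos] at hc' ⊢
    rw [ZMod.val_mul]
    rw [Nat.dvd_mod_iff (dvd_mul_right p q)]
    exact Dvd.dvd.mul_left hc' u.val
  · rw [Finset.card_image_of_injective _ hu.mul_right_injective]

private lemma sum_AP_mul {ω : ℂ} (hp : p.Prime) (hq : q.Prime)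
    (hω : IsPrimitiveRoot ω (p*q)) {u : ZMod (p*q)} (hu : IsUnit u) :
    ∑ c ∈ AP p q, ω ^ ((u * c).val) = 0 := by
  calc ∑ c ∈ AP p q, ω ^ ((u * c).val)
      = ∑ c ∈ Finset.image (fun c => u * c) (AP p q), ω ^ c.val :=
        (Finset.sum_image (f := fun c : ZMod (p*q) => ω ^ c.val) (g := fun c => u * c)
          (s := AP p q) (fun y _ z _ hyz => hu.mul_right_injective hyz)).symm
    _ = ∑ c ∈ AP p q, ω ^ c.val := by rw [image_mul_AP hp hq hu]
    _ = 0 := sum_AP hp.pos hq.one_lt hω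

private lemma sum_APerase {ω : ℂ} (hp : p.Prime) (hq : q.Prime)
    (hω : IsPrimitiveRoot ω (p*q)) {u : ZMod (p*q)} (hu : IsUnit u) :
    ∑ c ∈ (AP p q).erase 0, ω ^ ((u * c).val) = -1 := by
  haveI : NeZero (p*q) := ⟨Nat.mul_ne_zero hp.pos.ne' hq.pos.ne'⟩
  have h0 : (0 : ZMod (p*q)) ∈ AP p q :=
    (mem_AP hp.pos hq.pos).mpr (by rw [ZMod.val_zero]; exact dvd_zero _)
  have hadd := Finset.add_sum_erase (AP p q) (fun c => ω ^ ((u * c).val)) h0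
  rw [sum_AP_mul hp hq hω hu] at hadd
  have h1 : ω ^ ((u * (0 : ZMod (p*q))).val) = 1 := by
    rw [mul_zero, ZMod.val_zero, pow_zero]
  simp only [h1] at hadd
  linear_combination hadd

private lemma P_eq_APerase (hp : p.Prime) (hq : q.Prime) :
    (Finset.Icc 1 (q - 1)).image (fun k => ((k * p : ℕ) : ZMod (p * q)))
      = (AP p q).erase 0 := by
  haveI : NeZero (p*q) := ⟨Nat.mul_ne_zero hp.pos.ne' hq.pos.ne'⟩
  have hp2 := hp.two_le
  have hq2 := hq.two_le
  have hval : ∀ k : ℕ, k < q → (((k * p : ℕ) : ZMod (p*q))).val = k * p := by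
    intro k hk
    exact ZMod.val_natCast_of_lt (by
      calc k * p < q * p := (Nat.mul_lt_mul_right hp.pos).mpr hk
        _ = p * q := Nat.mul_comm _ _)
  ext c
  simp only [Finset.mem_image, Finset.mem_Icc, Finset.mem_erase]
  constructor
  · rintro ⟨k, ⟨hk1, hk2⟩, rfl⟩
    refine ⟨?_, Finset.mem_image.mpr ⟨k, Finset.mem_range.mpr (by omega), rfl⟩⟩
    intro h0
    have hv := hval k (by omega)
    rw [h0, ZMod.val_zero] at hv
    have : 0 < k * p := Nat.mul_pos (by omega) hp.pos
    omega
  · rintro ⟨h0, hc⟩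
    obtain ⟨j, hj, rfl⟩ := Finset.mem_image.mp hc
    have hjq := Finset.mem_range.mp hj
    have hj0 : j ≠ 0 := by
      rintro rfl
      exact h0 (by rw [Nat.zero_mul, Nat.cast_zero])
    exact ⟨j, ⟨by omega, by omega⟩, rfl⟩
end part9
set_option maxHeartbeats 2000000 in
theorem stmt_16
    (p q : ℕ) (hp : p.Prime) (hq : q.Prime) (hop : Odd p) (hoq : Odd q)
    (hne : p ≠ q) (d : ℕ) (hd : d = Nat.gcd (p - 1) (q - 1))
    (g : ℕ) (hgp : orderOf (g : ZMod p) = p - 1) (hgq : orderOf (g : ZMod q) = q - 1)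
    (x : ℕ) (hxp : (x : ZMod p) = (g : ZMod p)) (hxq : (x : ZMod q) = 1)
    (L : ℕ) (hL : L = (p - 1) * (q - 1) / d)
    (D : ℕ → Finset (ZMod (p * q)))
    (hD : D = fun i => (Finset.range L).image
      (fun t => (g : ZMod (p * q)) ^ t * (x : ZMod (p * q)) ^ i))
    (Dstar : ℕ → Finset (ZMod (p * q)))
    (hDstar : Dstar = fun j => (Finset.range (d / 2)).biUnion (fun i => D (2 * i + j)))
    (P : Finset (ZMod (p * q)))
    (hP : P = (Finset.Icc 1 (q - 1)).image (fun k => ((k * p : ℕ) : ZMod (p * q))))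
    (s : ℕ → ℕ)
    (hs : s = fun i : ℕ => if ((i : ℕ) : ZMod (p * q)) ∈ Dstar 1 ∪ P then 1 else 0)
    (hlt : p < q)
    (ω : ℂ) (hω : IsPrimitiveRoot ω (p * q))
    (S : ℂ → ℂ) (hS : S = fun z => ∑ i ∈ Finset.range (p * q), (s i : ℂ) * z ^ i)
    (Ω : ℕ → ℂ) (hΩ : Ω = fun j => ∑ a ∈ Dstar j, ω ^ (a.val)) :
    (∀ a ∈ Dstar 0, S (ω ^ a.val) = -Ω 0) ∧
      (∀ a ∈ Dstar 1, S (ω ^ a.val) = -Ω 1) := by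
  haveI : NeZero (p*q) := ⟨Nat.mul_ne_zero hp.pos.ne' hq.pos.ne'⟩
  have hp2 := hp.two_le
  have hq2 := hq.two_le
  have hp1e : 2 ∣ p - 1 := by obtain ⟨k, hk⟩ := hop; omega
  have hq1e : 2 ∣ q - 1 := by obtain ⟨k, hk⟩ := hoq; omega
  have hdp : d ∣ p - 1 := hd ▸ Nat.gcd_dvd_left _ _
  have hdq : d ∣ q - 1 := hd ▸ Nat.gcd_dvd_right _ _
  have hd0 : 0 < d := by
    rcases Nat.eq_zero_or_pos d with h | h
    · exfalso; rw [h] at hdp; have := Nat.eq_zero_of_zero_dvd hdp; omega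
    · exact h
  have hd2 : 2 ∣ d := by rw [hd]; exact Nat.dvd_gcd hp1e hq1e
  have hL0 : 0 < L := by
    rw [hL, Nat.mul_div_assoc _ hdq]
    have h1 : 0 < (q-1)/d := Nat.div_pos (Nat.le_of_dvd (by omega) hdq) hd0
    have h2 : 0 < p - 1 := by omega
    positivity
  have hGL := GL_eq_one hp hq hne hd hgp hgq hL
  obtain ⟨e, he⟩ := Xd_eq_Ge hp hq hne hd hgp hgq hxp hxq
  have hDs : ∀ j, Dstar j = (Finset.range (d/2)).biUnion (fun i => DD p q g x L (2*i + j)) := by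
    intro j; rw [hDstar, hD]; rfl
  have hPAP : P = (AP p q).erase 0 := by rw [hP]; exact P_eq_APerase hp hq
  -- Ω 0 + Ω 1 = 1
  have hΩsum : Ω 0 + Ω 1 = 1 := by
    simp only [hΩ]
    rw [← Finset.sum_union (by
      rw [hDs 0, hDs 1]
      exact DSS_disjoint hp hq hne hop hoq hd hgp hgq hxp hxq hL0 hGL)]
    apply sum_units_eq_one hp hq hne hω
    intro c
    rw [Finset.mem_union, hDs 0, hDs 1]
    constructor
    · rintro (h | h) <;>
      · obtain ⟨i, _, hm⟩ := Finset.mem_biUnion.mp h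
        exact mem_DD_isUnit hp hq hgp hgq hxp hxq hL0 hGL hm
    · intro hu
      exact Finset.mem_union.mp
        (unit_mem_DSS hp hq hne hoq hgp hgq hxp hxq hd0 hd2 hL0 hGL he hu)
  have key : ∀ (j : ℕ) (a : ZMod (p*q)), a ∈ Dstar j →
      S (ω ^ a.val) = Ω ((1 + j) % 2) - 1 := by
    intro j a ha
    rw [hDs j] at ha
    obtain ⟨i0, hi0r, hai⟩ := Finset.mem_biUnion.mp ha
    obtain ⟨s0, haeq⟩ := (memDD hL0 hGL).mp hai
    have hua : IsUnit a := by
      rw [haeq]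
      exact ((unitG hp hq hgp hgq).pow _).mul ((unitX hp hq hgp hxp hxq).pow _)
    have hωN : ω ^ (p*q) = 1 := hω.pow_eq_one
    have hstep : ∀ i ∈ Finset.range (p*q),
        (s i : ℂ) * (ω ^ a.val) ^ i
          = (fun c : ZMod (p*q) =>
              if c ∈ Dstar 1 ∪ P then ω ^ ((a * c).val) else 0) ((i : ℕ) : ZMod (p*q)) := by
      intro i _
      simp only [hs]
      split_ifs with hmem
      · rw [Nat.cast_one, one_mul, ← pow_mul]
        have h1 : (a * ((i : ℕ) : ZMod (p*q))).val = a.val * i % (p*q) := by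
          rw [ZMod.val_mul, ZMod.val_natCast]
          exact Nat.ModEq.mul_left a.val (Nat.mod_modEq i (p*q))
        rw [h1]
        exact (pow_mod16 hωN _).symm
      · rw [Nat.cast_zero, zero_mul]
    have hdisj : Disjoint (Dstar 1) P := by
      rw [Finset.disjoint_left]
      intro c hc1 hcP
      have hu : IsUnit c := by
        rw [hDs 1] at hc1
        obtain ⟨i, _, hm⟩ := Finset.mem_biUnion.mp hc1
        exact mem_DD_isUnit hp hq hgp hgq hxp hxq hL0 hGL hm
      rw [hPAP, Finset.mem_erase] at hcP
      exact AP_not_unit hp hq hcP.2 hu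
    have hsum1 : ∑ c ∈ Dstar 1, ω ^ ((a * c).val) = Ω ((1 + j) % 2) := by
      rw [hDs 1, haeq]
      calc ∑ c ∈ (Finset.range (d/2)).biUnion (fun i => DD p q g x L (2*i + 1)),
            ω ^ ((((g : ZMod (p*q))^s0 * (x : ZMod (p*q))^(2*i0 + j)) * c).val)
          = ∑ c ∈ Finset.image
              (fun c => ((g : ZMod (p*q))^s0 * (x : ZMod (p*q))^(2*i0 + j)) * c)
              ((Finset.range (d/2)).biUnion (fun i => DD p q g x L (2*i + 1))),
              ω ^ (c.val) := by
            refine (Finset.sum_image (f := fun c : ZMod (p*q) => ω ^ c.val) ?_).symm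
            intro y _ z _ hyz
            exact (haeq ▸ hua).mul_right_injective hyz
        _ = ∑ c ∈ (Finset.range (d/2)).biUnion
              (fun i => DD p q g x L (2*i + (1 + (2*i0 + j)) % 2)), ω ^ (c.val) := by
            rw [image_mul_DSS hd2 hd0 hL0 hGL he]
        _ = Ω ((1 + j) % 2) := by
            rw [show (1 + (2*i0 + j)) % 2 = (1 + j) % 2 from by omega]
            simp only [hΩ, hDs ((1 + j) % 2)]
    have hsum2 : ∑ c ∈ P, ω ^ ((a * c).val) = -1 := by
      rw [hPAP]
      exact sum_APerase hp hq hω hua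
    calc S (ω ^ a.val)
        = ∑ i ∈ Finset.range (p*q), (s i : ℂ) * (ω ^ a.val) ^ i := by rw [hS]
      _ = ∑ i ∈ Finset.range (p*q), (fun c : ZMod (p*q) =>
            if c ∈ Dstar 1 ∪ P then ω ^ ((a * c).val) else 0) ((i : ℕ) : ZMod (p*q)) :=
          Finset.sum_congr rfl hstep
      _ = ∑ c : ZMod (p*q),
            (if c ∈ Dstar 1 ∪ P then ω ^ ((a * c).val) else 0) :=
        by exact sum_range_univ16 (p*q) (fun c : ZMod (p*q) =>
            if c ∈ Dstar 1 ∪ P then ω ^ ((a * c).val) else 0)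
      _ = ∑ c ∈ Finset.univ ∩ (Dstar 1 ∪ P), ω ^ ((a * c).val) :=
          Finset.sum_ite_mem _ _ _
      _ = ∑ c ∈ Dstar 1 ∪ P, ω ^ ((a * c).val) := by rw [Finset.univ_inter]
      _ = ∑ c ∈ Dstar 1, ω ^ ((a * c).val) + ∑ c ∈ P, ω ^ ((a * c).val) :=
          Finset.sum_union hdisj
      _ = Ω ((1 + j) % 2) - 1 := by rw [hsum1, hsum2]; ring
  constructor
  · intro a ha
    have hk := key 0 a ha
    rw [show (1 + 0) % 2 = 1 from rfl] at hk
    rw [hk]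
    linear_combination hΩsum
  · intro a ha
    have hk := key 1 a ha
    rw [show (1 + 1) % 2 = 0 from rfl] at hk
    rw [hk]
    linear_combination hΩsum
end

section
/- Let {s_i} be a binary sequence of period N with S(x) = Σ_{i=0}^{N-1} s_i x^i ∈ Z[x], and let A be the circulant matrix with a_{i,j} = s_{(i-j) mod N}. If det(A) ≠ 0 (over Q), then gcd(S(2), 2^N - 1) divides gcd(det(A), 2^N - 1). -/
lemma inv_lem (N i j : ℕ) (hN : 0 < N) (hj : j < N) :
    (i + N - (i + N - j) % N) % N = j := by
  have h1 : (i + N - j) % N < N := Nat.mod_lt _ hN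
  have h2 := Nat.div_add_mod (i + N - j) N
  have h3 : i + N - (i + N - j) % N = N * ((i + N - j) / N) + j := by omega
  rw [h3, Nat.mul_add_mod, Nat.mod_eq_of_lt hj]

theorem stmt_18 (N : ℕ) (hN : 0 < N) (s : ℕ → ℕ) (hbin : ∀ i, s i = 0 ∨ s i = 1)
    (A : Matrix (Fin N) (Fin N) ℤ)
    (hA : A = fun i j => (s ((i.val + N - j.val) % N) : ℤ))
    (hdet : A.det ≠ 0) :
    (Nat.gcd (∑ i ∈ Finset.range N, s i * 2 ^ i) (2 ^ N - 1) : ℤ) ∣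
      Int.gcd A.det (2 ^ N - 1) := by
  set S2 : ℕ := ∑ i ∈ Finset.range N, s i * 2 ^ i with hS2
  set d : ℕ := Nat.gcd S2 (2 ^ N - 1) with hd
  have h1le : (1:ℕ) ≤ 2 ^ N := Nat.one_le_two_pow
  have hcastM : ((2 ^ N - 1 : ℕ) : ℤ) = 2 ^ N - 1 := by push_cast [h1le]; ring
  have hdM : (d : ℤ) ∣ 2 ^ N - 1 := by
    rw [← hcastM]; exact Int.natCast_dvd_natCast.mpr (Nat.gcd_dvd_right _ _)
  have hdS : (d : ℤ) ∣ (S2 : ℤ) := Int.natCast_dvd_natCast.mpr (Nat.gcd_dvd_left _ _)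
  have hdodd : Nat.Coprime d 2 := by
    have hdvd : d ∣ 2 ^ N - 1 := Nat.gcd_dvd_right _ _
    have h2N : (2:ℕ) ∣ 2 ^ N := dvd_pow_self 2 hN.ne'
    have hnd : ¬ (2:ℕ) ∣ d := by
      intro h2
      have := h2.trans hdvd
      omega
    exact ((Nat.Prime.coprime_iff_not_dvd Nat.prime_two).mpr hnd).symm
  have hcop2 : IsCoprime (d : ℤ) 2 := by
    have := Nat.isCoprime_iff_coprime.mpr hdodd
    exact_mod_cast this
  have hpow : ∀ a : ℕ, (d : ℤ) ∣ 2 ^ a - 2 ^ (a % N) := by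
    intro a
    have : (2:ℤ) ^ a - 2 ^ (a % N) = 2 ^ (a % N) * ((2 ^ N) ^ (a / N) - 1) := by
      rw [mul_sub, mul_one, ← pow_mul, ← pow_add, Nat.mod_add_div]
    rw [this]
    exact Dvd.dvd.mul_left (hdM.trans (by simpa using sub_dvd_pow_sub_pow ((2:ℤ)^N) 1 (a / N))) _
  set v : Fin N → ℤ := fun j => 2 ^ (N - j.val) with hv
  have key : ∀ i : Fin N, (d : ℤ) ∣ A.mulVec v i := by
    intro i
    have hmul : (2:ℤ) ^ (i:ℕ) * A.mulVec v i =
        ∑ j : Fin N, (s ((i.val + N - j.val) % N) : ℤ) * 2 ^ (i.val + N - j.val) := by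
      rw [Matrix.mulVec, hA]
      simp only [dotProduct, Finset.mul_sum]
      refine Finset.sum_congr rfl fun j _ => ?_
      rw [hv]
      have he : (N - j.val + i.val) = i.val + N - j.val := by
        have := j.isLt; omega
      rw [mul_comm ((2:ℤ)^(i:ℕ)), mul_assoc, ← pow_add, he]
    have hre : ∑ j : Fin N, (s ((i.val + N - j.val) % N) : ℤ) * 2 ^ ((i.val + N - j.val) % N)
        = (S2 : ℤ) := by
      rw [hS2, Nat.cast_sum,
        Fin.sum_univ_eq_sum_range
          (fun jv => ((s ((i.val + N - jv) % N) : ℤ) * 2 ^ ((i.val + N - jv) % N)))]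
      refine Finset.sum_nbij' (fun j => (i.val + N - j) % N) (fun k => (i.val + N - k) % N)
        ?_ ?_ ?_ ?_ ?_
      · intro a _; exact Finset.mem_range.mpr (Nat.mod_lt _ hN)
      · intro a _; exact Finset.mem_range.mpr (Nat.mod_lt _ hN)
      · intro a ha; exact inv_lem N i.val a hN (Finset.mem_range.mp ha)
      · intro a ha; exact inv_lem N i.val a hN (Finset.mem_range.mp ha)
      · intro a _; push_cast; ring
    have heq : (2:ℤ) ^ (i:ℕ) * A.mulVec v i - (S2 : ℤ)
        = ∑ j : Fin N, (s ((i.val + N - j.val) % N) : ℤ) *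
            (2 ^ (i.val + N - j.val) - 2 ^ ((i.val + N - j.val) % N)) := by
      rw [hmul, ← hre, ← Finset.sum_sub_distrib]
      refine Finset.sum_congr rfl fun j _ => ?_
      ring
    have hterm : (d : ℤ) ∣ (2:ℤ) ^ (i:ℕ) * A.mulVec v i - (S2 : ℤ) := by
      rw [heq]
      exact Finset.dvd_sum fun j _ => Dvd.dvd.mul_left (hpow _) _
    have hfull : (d : ℤ) ∣ (2:ℤ) ^ (i:ℕ) * A.mulVec v i := by
      have := dvd_add hterm hdS
      simpa using this
    exact (hcop2.pow_right).dvd_of_dvd_mul_left hfull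
  -- now divisibility of det
  have hadj : A.adjugate.mulVec (A.mulVec v) = A.det • v := by
    rw [Matrix.mulVec_mulVec, Matrix.adjugate_mul, Matrix.smul_mulVec, Matrix.one_mulVec]
  set i0 : Fin N := ⟨0, hN⟩ with hi0
  have hcomp : (d : ℤ) ∣ A.det * 2 ^ N := by
    have h1 : (d : ℤ) ∣ A.adjugate.mulVec (A.mulVec v) i0 := by
      rw [Matrix.mulVec]
      exact Finset.dvd_sum fun j _ => Dvd.dvd.mul_left (key j) _
    rw [hadj] at h1
    simpa [hv, hi0] using h1
  have hddet : (d : ℤ) ∣ A.det := (hcop2.pow_right).dvd_of_dvd_mul_right hcomp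
  rw [Int.natCast_dvd_natCast, Int.gcd]
  refine Nat.dvd_gcd ?_ ?_
  · have := Int.natAbs_dvd_natAbs.mpr hddet
    simpa using this
  · rw [← hcastM, Int.natAbs_natCast]
    exact Nat.gcd_dvd_right _ _
end
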